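/- arXiv:2408.10881 — 6 statements merged into one kernel-verified Lean document; each statement's English description precedes it below -/
import Mathlib

section
/- Let k ≥ 2 be an integer, ε > 0, and let C be an integer with C ≥ (ε^{−1}·2^k)^{1/(εk)}. Then there are at least (1−ε)·C^k tuples (a₁, a₂, …, a_k) ∈ {1,…,C}^k for which the map (i₁,…,i_k) ↦ i₁a₁ + i₂a₂ + ⋯ + i_ka_k is injective on the set of integer tuples (i₁,…,i_k) with 1 ≤ i_j ≤ C^{1/k−ε} for all j. -/
open Finset

lemma solCount (k C : ℕ) (d : Fin k → ℤ) (j₀ : Fin k) (hd : d j₀ ≠ 0) :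
    ((Fintype.piFinset fun _ : Fin k => Finset.Icc 1 C).filter
      fun a => ∑ j, d j * (a j : ℤ) = 0).card ≤ C ^ (k - 1) := by
  classical
  set t := Fintype.piFinset fun j : Fin k => if j = j₀ then ({0} : Finset ℕ) else Finset.Icc 1 C
    with ht
  have hcard : t.card = C ^ (k - 1) := by
    rw [ht, Fintype.card_piFinset]
    rw [← Finset.mul_prod_erase univ _ (mem_univ j₀)]
    simp only [if_pos rfl, Finset.card_singleton, one_mul]
    rw [Finset.prod_congr rfl (fun j hj => by
      rw [if_neg (Finset.ne_of_mem_erase hj), Nat.card_Icc])]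
    simp [Finset.card_erase_of_mem]
  rw [← hcard]
  apply Finset.card_le_card_of_injOn (fun a => Function.update a j₀ 0)
  · intro a ha
    rw [Finset.mem_coe, Finset.mem_filter, Fintype.mem_piFinset] at ha
    rw [ht, Finset.mem_coe, Fintype.mem_piFinset]
    intro j
    by_cases h : j = j₀
    · subst h; simp
    · simp only [Function.update_of_ne h, if_neg h]
      exact ha.1 j
  · intro a ha b hb hab
    simp only [Finset.coe_filter, Set.mem_setOf_eq] at ha hb
    have hne : ∀ j, j ≠ j₀ → a j = b j := by
      intro j hj
      have := congrFun hab j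
      simpa [Function.update_of_ne hj] using this
    have hsum : ∑ j ∈ univ.erase j₀, d j * (a j : ℤ) =
        ∑ j ∈ univ.erase j₀, d j * (b j : ℤ) := by
      apply Finset.sum_congr rfl
      intro j hj
      rw [hne j (Finset.ne_of_mem_erase hj)]
    have h1 : d j₀ * (a j₀ : ℤ) + ∑ j ∈ univ.erase j₀, d j * (a j : ℤ) = 0 := by
      rw [Finset.add_sum_erase univ (fun j => d j * (a j : ℤ)) (mem_univ j₀)]
      exact ha.2
    have h2 : d j₀ * (b j₀ : ℤ) + ∑ j ∈ univ.erase j₀, d j * (b j : ℤ) = 0 := by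
      rw [Finset.add_sum_erase univ (fun j => d j * (b j : ℤ)) (mem_univ j₀)]
      exact hb.2
    have : d j₀ * (a j₀ : ℤ) = d j₀ * (b j₀ : ℤ) := by linarith [hsum]
    have hj₀ : a j₀ = b j₀ := by
      have := mul_left_cancel₀ hd this
      exact_mod_cast this
    funext j
    by_cases h : j = j₀
    · subst h; exact hj₀
    · exact hne j h

/-- Let `k ≥ 2`, `ε > 0`, and `C` an integer with `C ≥ (ε⁻¹·2^k)^{1/(εk)}`.
Then there are at least `(1−ε)·C^k` tuples `(a₁,…,a_k) ∈ {1,…,C}^k` for which the map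
`(i₁,…,i_k) ↦ i₁a₁ + ⋯ + i_ka_k` is injective on integer tuples with `1 ≤ i_j ≤ C^{1/k−ε}`. -/
theorem statement12 (k : ℕ) (hk : 2 ≤ k) (ε : ℝ) (hε : 0 < ε) (C : ℕ)
    (hC : (ε⁻¹ * 2 ^ k) ^ (1 / (ε * k)) ≤ (C : ℝ)) :
    (1 - ε) * (C : ℝ) ^ k ≤
      (Set.ncard {a : Fin k → ℕ |
        (∀ i, a i ∈ Finset.Icc 1 C) ∧
        ∀ x y : Fin k → ℤ,
          (∀ j, 1 ≤ x j ∧ (x j : ℝ) ≤ (C : ℝ) ^ ((1 : ℝ) / k - ε)) →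
          (∀ j, 1 ≤ y j ∧ (y j : ℝ) ≤ (C : ℝ) ^ ((1 : ℝ) / k - ε)) →
          ∑ j, x j * (a j : ℤ) = ∑ j, y j * (a j : ℤ) → x = y} : ℝ) := by
  classical
  rcases le_or_gt 1 ε with hε1 | hε1
  · refine le_trans ?_ (Nat.cast_nonneg _)
    have h1 : (1 - ε) ≤ 0 := by linarith
    have h2 : (0:ℝ) ≤ (C:ℝ)^k := by positivity
    nlinarith
  -- now ε < 1
  have hk0 : (0:ℝ) < (k:ℝ) := by exact_mod_cast lt_of_lt_of_le (by norm_num) hk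
  have hXpos : (0:ℝ) < ε⁻¹ * 2 ^ k := by positivity
  have hX1 : (1:ℝ) < ε⁻¹ * 2 ^ k := by
    have h1 : (1:ℝ) < ε⁻¹ := (one_lt_inv₀ hε).mpr hε1
    have h2 : (1:ℝ) ≤ 2 ^ k := one_le_pow₀ (by norm_num)
    nlinarith
  have hek : (0:ℝ) < ε * k := by positivity
  have hC1 : (1:ℝ) < (C:ℝ) := by
    refine lt_of_lt_of_le ?_ hC
    exact Real.one_lt_rpow_iff_of_pos hXpos |>.mpr (Or.inl ⟨hX1, by positivity⟩)
  have hC0 : (0:ℝ) < (C:ℝ) := by linarith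
  set r : ℝ := (C:ℝ) ^ ((1:ℝ)/k - ε) with hr
  have hr0 : (0:ℝ) ≤ r := Real.rpow_nonneg hC0.le _
  set M : ℤ := ⌊r⌋ with hM
  set P : (Fin k → ℕ) → Prop := fun a =>
    ∀ x y : Fin k → ℤ,
      (∀ j, 1 ≤ x j ∧ (x j : ℝ) ≤ (C : ℝ) ^ ((1 : ℝ) / k - ε)) →
      (∀ j, 1 ≤ y j ∧ (y j : ℝ) ≤ (C : ℝ) ^ ((1 : ℝ) / k - ε)) →
      ∑ j, x j * (a j : ℤ) = ∑ j, y j * (a j : ℤ) → x = y with hP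
  set A := Fintype.piFinset fun _ : Fin k => Finset.Icc 1 C with hA
  have hSet : {a : Fin k → ℕ |
        (∀ i, a i ∈ Finset.Icc 1 C) ∧
        ∀ x y : Fin k → ℤ,
          (∀ j, 1 ≤ x j ∧ (x j : ℝ) ≤ (C : ℝ) ^ ((1 : ℝ) / k - ε)) →
          (∀ j, 1 ≤ y j ∧ (y j : ℝ) ≤ (C : ℝ) ^ ((1 : ℝ) / k - ε)) →
          ∑ j, x j * (a j : ℤ) = ∑ j, y j * (a j : ℤ) → x = y}
      = ↑(A.filter P) := by
    ext a
    simp [hA, hP, Fintype.mem_piFinset]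
  rw [hSet, Set.ncard_coe_finset]
  -- counting
  set bad := A.filter (fun a => ¬ P a) with hbaddef
  have hAcard : A.card = C ^ k := by
    simp [hA, Fintype.card_piFinset, Nat.card_Icc]
  have hsplit : (A.filter P).card + bad.card = C ^ k := by
    rw [hbaddef, Finset.card_filter_add_card_filter_not, hAcard]
  set D := Fintype.piFinset fun _ : Fin k => Finset.Icc (1 - M) (M - 1) with hD
  have hbadsub : bad ⊆ (D.erase 0).biUnion
      (fun d => A.filter fun a => ∑ j, d j * (a j : ℤ) = 0) := by
    intro a ha
    rw [hbaddef, mem_filter] at ha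
    obtain ⟨haA, hnP⟩ := ha
    simp only [hP] at hnP
    push_neg at hnP
    obtain ⟨x, y, hx, hy, hsum, hxy⟩ := hnP
    refine Finset.mem_biUnion.mpr ⟨x - y, ?_, ?_⟩
    · rw [Finset.mem_erase]
      constructor
      · exact sub_ne_zero.mpr hxy
      · rw [hD, Fintype.mem_piFinset]
        intro j
        have hxj := hx j
        have hyj := hy j
        have hxM : x j ≤ M := Int.le_floor.mpr hxj.2
        have hyM : y j ≤ M := Int.le_floor.mpr hyj.2
        rw [Finset.mem_Icc]
        simp only [Pi.sub_apply]
        omega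
    · rw [mem_filter]
      refine ⟨haA, ?_⟩
      simp only [Pi.sub_apply, sub_mul]
      rw [Finset.sum_sub_distrib, hsum, sub_self]
  have hbadcard : bad.card ≤ (2 * M.toNat) ^ k * C ^ (k - 1) := by
    calc bad.card ≤ ((D.erase 0).biUnion
        (fun d => A.filter fun a => ∑ j, d j * (a j : ℤ) = 0)).card :=
          Finset.card_le_card hbadsub
      _ ≤ ∑ d ∈ D.erase 0, (A.filter fun a => ∑ j, d j * (a j : ℤ) = 0).card :=
          Finset.card_biUnion_le
      _ ≤ ∑ d ∈ D.erase 0, C ^ (k - 1) := by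
          apply Finset.sum_le_sum
          intro d hd
          have hd0 : d ≠ 0 := Finset.ne_of_mem_erase hd
          obtain ⟨j₀, hj₀⟩ := Function.ne_iff.mp hd0
          exact solCount k C d j₀ hj₀
      _ = (D.erase 0).card * C ^ (k - 1) := by
          rw [Finset.sum_const, smul_eq_mul]
      _ ≤ D.card * C ^ (k - 1) := by
          exact Nat.mul_le_mul_right _ (Finset.card_le_card (Finset.erase_subset _ _))
      _ ≤ (2 * M.toNat) ^ k * C ^ (k - 1) := by
          apply Nat.mul_le_mul_right
          rw [hD, Fintype.card_piFinset]
          have h1 : (Finset.Icc (1 - M) (M - 1)).card ≤ 2 * M.toNat := by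
            rw [Int.card_Icc]
            omega
          calc ∏ _j : Fin k, (Finset.Icc (1 - M) (M - 1)).card
              ≤ ∏ _j : Fin k, 2 * M.toNat := Finset.prod_le_prod' (fun _ _ => h1)
            _ = (2 * M.toNat) ^ k := by
                rw [Finset.prod_const, Finset.card_univ, Fintype.card_fin]
  -- real estimates
  have hMr : (M.toNat : ℝ) ≤ r := by
    rcases le_or_gt M 0 with h | h
    · rw [Int.toNat_of_nonpos h]; exact_mod_cast hr0
    · have : ((M.toNat : ℤ) : ℝ) ≤ r := by
        rw [Int.toNat_of_nonneg h.le]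
        exact Int.floor_le r
      exact_mod_cast this
  have hpow : ε⁻¹ * 2 ^ k ≤ (C:ℝ) ^ (ε * k) := by
    have h := Real.rpow_le_rpow (Real.rpow_nonneg hXpos.le _) hC hek.le
    rwa [← Real.rpow_mul hXpos.le, one_div_mul_cancel hek.ne', Real.rpow_one] at h
  have h2k : (2:ℝ) ^ k ≤ ε * (C:ℝ) ^ (ε * k) := by
    have := mul_le_mul_of_nonneg_left hpow hε.le
    rwa [← mul_assoc, mul_inv_cancel₀ hε.ne', one_mul] at this
  -- key: bad.card ≤ ε * C^k (over ℝ)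
  have hkey : ((2 * M.toNat : ℕ) ^ k * C ^ (k - 1) : ℝ) ≤ ε * (C:ℝ) ^ k := by
    have e1 : ((2 * M.toNat : ℕ) ^ k : ℝ) = 2 ^ k * ((M.toNat : ℝ)) ^ k := by
      push_cast; ring
    have e2 : ((M.toNat : ℝ)) ^ k ≤ r ^ k := pow_le_pow_left₀ (by positivity) hMr k
    have e3 : r ^ k = (C:ℝ) ^ ((1:ℝ) - ε * k) := by
      rw [hr, ← Real.rpow_natCast ((C:ℝ) ^ ((1:ℝ)/k - ε)) k, ← Real.rpow_mul hC0.le]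
      congr 1
      field_simp
    have e4 : ((C:ℝ)) ^ (k - 1 : ℕ) = (C:ℝ) ^ ((k:ℝ) - 1) := by
      rw [← Real.rpow_natCast (C:ℝ) (k - 1)]
      congr 1
      have : (1:ℕ) ≤ k := le_trans (by norm_num) hk
      push_cast [this]
      ring
    calc ((2 * M.toNat : ℕ) ^ k * C ^ (k - 1) : ℝ)
        = 2 ^ k * ((M.toNat : ℝ)) ^ k * (C:ℝ) ^ (k - 1 : ℕ) := by push_cast; ring
      _ ≤ 2 ^ k * r ^ k * (C:ℝ) ^ (k - 1 : ℕ) := by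
          apply mul_le_mul_of_nonneg_right _ (by positivity)
          exact mul_le_mul_of_nonneg_left e2 (by positivity)
      _ = 2 ^ k * ((C:ℝ) ^ ((1:ℝ) - ε * k) * (C:ℝ) ^ ((k:ℝ) - 1)) := by
          rw [e3, e4]; ring
      _ = 2 ^ k * (C:ℝ) ^ ((k:ℝ) - ε * k) := by
          rw [← Real.rpow_add hC0]; ring_nf
      _ ≤ (ε * (C:ℝ) ^ (ε * k)) * (C:ℝ) ^ ((k:ℝ) - ε * k) := by
          exact mul_le_mul_of_nonneg_right h2k (Real.rpow_nonneg hC0.le _)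
      _ = ε * (C:ℝ) ^ ((ε * k) + ((k:ℝ) - ε * k)) := by
          rw [Real.rpow_add hC0]; ring
      _ = ε * (C:ℝ) ^ k := by
          norm_num
  have hbadR : (bad.card : ℝ) ≤ ε * (C:ℝ) ^ k := by
    refine le_trans ?_ hkey
    exact_mod_cast hbadcard
  have hgoodR : ((A.filter P).card : ℝ) + (bad.card : ℝ) = (C:ℝ) ^ k := by
    exact_mod_cast hsplit
  linarith
end

section
/- Let a, b, c be integers and L ≥ 1 an integer. Suppose (i₁, j₁, k₁) is an integer solution of the equation i·a + j·b + k·c = 0 with 1 ≤ |i₁| < |j₁|, and suppose that every integer solution (i,j,k) ∈ {−L,…,L}³ of i·a + j·b + k·c = 0 is a rational multiple of (i₁, j₁, k₁). Then there exists a set A ⊆ [L] with |A| ≥ L^{0.44} such that the only triple (i,j,k) ∈ (A−A)³ with i·a + j·b + k·c = 0 is (0,0,0). Moreover, if |j₁|/gcd(|i₁|,|j₁|) > e^{1000}, then A can be chosen with |A| ≥ L^{0.499}. -/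
open Finset Pointwise

set_option linter.unusedVariables false

/-- `A` is good for the pair `(p,q)`: no nonzero `f` with `p*f` and `q*f`
both in the difference set `A - A`. -/
def Good (p q : ℕ) (A : Finset ℤ) : Prop :=
  ∀ f : ℤ, (p : ℤ) * f ∈ A - A → (q : ℤ) * f ∈ A - A → f = 0

lemma neg_mem_subF {A : Finset ℤ} {x : ℤ} (h : x ∈ A - A) : -x ∈ A - A := by
  rw [Finset.mem_sub] at h ⊢
  obtain ⟨u, hu, v, hv, huv⟩ := h
  exact ⟨v, hv, u, hu, by omega⟩

lemma sub_boundF {A : Finset ℤ} {w : ℤ} (hA : A ⊆ Finset.Icc 0 (w - 1)) {x : ℤ}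
    (hx : x ∈ A - A) : -(w - 1) ≤ x ∧ x ≤ w - 1 := by
  rw [Finset.mem_sub] at hx
  obtain ⟨u, hu, v, hv, huv⟩ := hx
  have h1 := Finset.mem_Icc.mp (hA hu)
  have h2 := Finset.mem_Icc.mp (hA hv)
  omega

lemma good_interval (p q : ℕ) (u : ℤ) (h1 : 1 ≤ u) (hup : u ≤ (p : ℤ)) :
    Good p q (Finset.Icc 0 (u - 1)) := by
  intro f hp _
  have hb := sub_boundF (Finset.Subset.refl _) hp
  rcases lt_trichotomy f 0 with hf | hf | hf
  · exfalso
    have h2 : (p : ℤ) * f ≤ (p : ℤ) * (-1) :=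
      mul_le_mul_of_nonneg_left (by omega) (by positivity)
    have := hb.1
    linarith
  · exact hf
  · exfalso
    have h2 : (p : ℤ) * 1 ≤ (p : ℤ) * f :=
      mul_le_mul_of_nonneg_left (by omega) (by positivity)
    have := hb.2
    linarith

lemma image_add_sub (A : Finset ℤ) (c : ℤ) :
    A.image (· + c) - A.image (· + c) = A - A := by
  ext x
  simp only [Finset.mem_sub, Finset.mem_image]
  constructor
  · rintro ⟨u, ⟨u', hu', rfl⟩, v, ⟨v', hv', rfl⟩, h⟩
    exact ⟨u', hu', v', hv', by omega⟩
  · rintro ⟨u, hu, v, hv, h⟩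
    exact ⟨u + c, ⟨u, hu, rfl⟩, v + c, ⟨v, hv, rfl⟩, by omega⟩

lemma good_image_add {p q : ℕ} {A : Finset ℤ} (h : Good p q A) (c : ℤ) :
    Good p q (A.image (· + c)) := by
  intro f h1 h2
  rw [image_add_sub] at h1 h2
  exact h f h1 h2

lemma mul_eq_zero_of_abs_lt {M k e : ℤ} (hM : 0 < M) (he : e = M * k)
    (h1 : -M < e) (h2 : e < M) : k = 0 ∧ e = 0 := by
  have hk : k = 0 := by
    rcases lt_trichotomy k 0 with h | h | h
    · nlinarith
    · exact h
    · nlinarith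
  exact ⟨hk, by simp [he, hk]⟩

/-- digit composition of two finite sets -/
def comp (M : ℤ) (S T : Finset ℤ) : Finset ℤ :=
  (S ×ˢ T).image fun z => z.1 + M * z.2

lemma mem_comp {M : ℤ} {S T : Finset ℤ} {x : ℤ} :
    x ∈ comp M S T ↔ ∃ s ∈ S, ∃ t ∈ T, s + M * t = x := by
  simp only [comp, Finset.mem_image, Finset.mem_product, Prod.exists]
  constructor
  · rintro ⟨u, v, ⟨hu, hv⟩, h⟩
    exact ⟨u, hu, v, hv, h⟩
  · rintro ⟨u, hu, v, hv, h⟩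
    exact ⟨u, v, ⟨hu, hv⟩, h⟩

lemma comp_subset {M w N : ℤ} {S T : Finset ℤ} (hS : S ⊆ Finset.Icc 0 (w - 1))
    (hT : T ⊆ Finset.Icc 0 (N - 1)) (hM : 0 ≤ M) :
    comp M S T ⊆ Finset.Icc 0 (w - 1 + M * (N - 1)) := by
  intro x hx
  rw [mem_comp] at hx
  obtain ⟨s, hs, t, ht, rfl⟩ := hx
  have h1 := Finset.mem_Icc.mp (hS hs)
  have h2 := Finset.mem_Icc.mp (hT ht)
  have hu : M * t ≤ M * (N - 1) := mul_le_mul_of_nonneg_left (by omega) hM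
  have hl : 0 ≤ M * t := mul_nonneg hM (by omega)
  rw [Finset.mem_Icc]
  constructor <;> linarith

lemma comp_card {M w : ℤ} {S T : Finset ℤ} (hS : S ⊆ Finset.Icc 0 (w - 1))
    (hwM : w ≤ M) (hw : 1 ≤ w) :
    (comp M S T).card = S.card * T.card := by
  rw [comp, Finset.card_image_of_injOn, Finset.card_product]
  rintro ⟨s, t⟩ hst ⟨s', t'⟩ hst' h
  simp only [Finset.mem_coe, Finset.mem_product] at hst hst'
  simp only at h
  have h1 := Finset.mem_Icc.mp (hS hst.1)
  have h2 := Finset.mem_Icc.mp (hS hst'.1)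
  have hM0 : (0 : ℤ) < M := by omega
  have key := mul_eq_zero_of_abs_lt hM0
    (show s - s' = M * (t' - t) by linear_combination h) (by omega) (by omega)
  have hs' : s = s' := by omega
  have ht' : t = t' := by
    have := key.1
    omega
  simp [hs', ht']

lemma good_comp {p q : ℕ} {M w : ℤ} {S T : Finset ℤ}
    (hq : 1 ≤ q) (hqp : q < p) (cop : IsCoprime (p : ℤ) (q : ℤ))
    (hS : S ⊆ Finset.Icc 0 (w - 1)) (hw : 1 ≤ w)
    (hM : ((p : ℤ) + q) * (w - 1) < M)
    (hgS : Good p q S) (hgT : Good p q T) : Good p q (comp M S T) := by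
  have hp1 : (1 : ℤ) ≤ (p : ℤ) := by exact_mod_cast Nat.one_le_iff_ne_zero.mpr (by omega)
  have hq1 : (1 : ℤ) ≤ (q : ℤ) := by exact_mod_cast hq
  have hM0 : (0 : ℤ) < M := by
    have : (0 : ℤ) ≤ ((p : ℤ) + q) * (w - 1) :=
      mul_nonneg (by positivity) (by linarith)
    linarith
  intro f hpf hqf
  have hdec : ∀ x, x ∈ comp M S T - comp M S T →
      ∃ σ ∈ S - S, ∃ d ∈ T - T, x = σ + M * d := by
    intro x hx
    rw [Finset.mem_sub] at hx
    obtain ⟨c1, hc1, c2, hc2, rfl⟩ := hx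
    rw [mem_comp] at hc1 hc2
    obtain ⟨s1, hs1, t1, ht1, rfl⟩ := hc1
    obtain ⟨s2, hs2, t2, ht2, rfl⟩ := hc2
    exact ⟨s1 - s2, Finset.sub_mem_sub hs1 hs2, t1 - t2,
      Finset.sub_mem_sub ht1 ht2, by ring⟩
  obtain ⟨σ, hσ, dA, hdA, hEq1⟩ := hdec _ hpf
  obtain ⟨τ, hτ, dB, hdB, hEq2⟩ := hdec _ hqf
  have hσb := sub_boundF hS hσ
  have hτb := sub_boundF hS hτ
  have hkey : (q : ℤ) * σ - (p : ℤ) * τ = M * ((p : ℤ) * dB - (q : ℤ) * dA) := by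
    have h0 : (q : ℤ) * ((p : ℤ) * f) = (p : ℤ) * ((q : ℤ) * f) := by ring
    rw [hEq1, hEq2] at h0
    linear_combination h0
  have hb1 : (q : ℤ) * σ ≤ (q : ℤ) * (w - 1) :=
    mul_le_mul_of_nonneg_left hσb.2 (by positivity)
  have hb2 : (q : ℤ) * (-(w - 1)) ≤ (q : ℤ) * σ :=
    mul_le_mul_of_nonneg_left hσb.1 (by positivity)
  have hb3 : (p : ℤ) * τ ≤ (p : ℤ) * (w - 1) :=
    mul_le_mul_of_nonneg_left hτb.2 (by positivity)
  have hb4 : (p : ℤ) * (-(w - 1)) ≤ (p : ℤ) * τ :=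
    mul_le_mul_of_nonneg_left hτb.1 (by positivity)
  have hexp : ((p : ℤ) + q) * (w - 1) = (p : ℤ) * (w - 1) + (q : ℤ) * (w - 1) := by ring
  have hexp2 : (q : ℤ) * (-(w - 1)) = -((q : ℤ) * (w - 1)) := by ring
  have hexp3 : (p : ℤ) * (-(w - 1)) = -((p : ℤ) * (w - 1)) := by ring
  have hzero := mul_eq_zero_of_abs_lt hM0 hkey (by linarith) (by linarith)
  have hdd : (p : ℤ) * dB - (q : ℤ) * dA = 0 := hzero.1
  have hss : (q : ℤ) * σ = (p : ℤ) * τ := by linarith [hzero.2]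
  -- p divides σ
  have hps : (p : ℤ) ∣ σ := cop.dvd_of_dvd_mul_right ⟨τ, by linear_combination hss⟩
  obtain ⟨g, hg⟩ := hps
  have hpne : (p : ℤ) ≠ 0 := by linarith
  have hτg : τ = (q : ℤ) * g := by
    apply mul_left_cancel₀ hpne
    rw [hg] at hss
    linear_combination -hss
  have hg0 : g = 0 := hgS g (by rw [← hg]; exact hσ) (by rw [← hτg]; exact hτ)
  have hσ0 : σ = 0 := by rw [hg, hg0, mul_zero]
  -- second stage
  have hpd : (p : ℤ) ∣ dA := cop.dvd_of_dvd_mul_right ⟨dB, by linear_combination -hdd⟩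
  obtain ⟨h, hh⟩ := hpd
  have hdB' : dB = (q : ℤ) * h := by
    apply mul_left_cancel₀ hpne
    rw [hh] at hdd
    linear_combination hdd
  have hh0 : h = 0 := hgT h (by rw [← hh]; exact hdA) (by rw [← hdB']; exact hdB)
  have hfin : (p : ℤ) * f = 0 := by
    rw [hEq1, hσ0, hh, hh0]; ring
  rcases mul_eq_zero.mp hfin with h' | h'
  · exact absurd h' hpne
  · exact h'

/-- there is a good set in `[0, L)` of size at least `L^(aa/bb)` -/
def Pg (p q aa bb L : ℕ) : Prop :=
  ∃ A : Finset ℤ, Good p q A ∧ A ⊆ Finset.Icc 0 ((L : ℤ) - 1) ∧ L ^ aa ≤ A.card ^ bb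

lemma card_IccZ (u : ℕ) : (Finset.Icc (0 : ℤ) ((u : ℤ) - 1)).card = u := by
  rw [Int.card_Icc]
  omega

lemma copZ (p q : ℕ) (h : Nat.gcd p q = 1) : IsCoprime (p : ℤ) (q : ℤ) := by
  rw [Int.isCoprime_iff_gcd_eq_one, Int.gcd_natCast_natCast]
  exact h

lemma Pg_interval (p q aa bb L u : ℕ) (hu1 : 1 ≤ u) (hup : u ≤ p) (huL : u ≤ L)
    (hc : L ^ aa ≤ u ^ bb) : Pg p q aa bb L := by
  refine ⟨Finset.Icc 0 ((u : ℤ) - 1),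
    good_interval p q u (by exact_mod_cast hu1) (by exact_mod_cast hup), ?_, ?_⟩
  · apply Finset.Icc_subset_Icc le_rfl
    have : (u : ℤ) ≤ (L : ℤ) := by exact_mod_cast huL
    omega
  · rw [card_IccZ]
    exact hc

lemma Pg_interval_range (p q aa bb L c : ℕ) (hab : aa ≤ bb) (hp1 : 1 ≤ p) (hL : 1 ≤ L)
    (hLc : L ≤ c) (hc : c ^ aa ≤ p ^ bb) : Pg p q aa bb L := by
  rcases le_or_gt L p with h | h
  · exact Pg_interval p q aa bb L L hL h le_rfl (Nat.pow_le_pow_right hL hab)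
  · exact Pg_interval p q aa bb L p hp1 le_rfl (le_of_lt h)
      (le_trans (Nat.pow_le_pow_left hLc aa) hc)

lemma Pg_of_set (p q aa bb L w m : ℕ) (A : Finset ℤ) (hg : Good p q A)
    (hA : A ⊆ Finset.Icc 0 ((w : ℤ) - 1)) (hwL : w ≤ L) (hm : A.card = m)
    (hc : L ^ aa ≤ m ^ bb) : Pg p q aa bb L := by
  refine ⟨A, hg, hA.trans (Finset.Icc_subset_Icc le_rfl ?_), by rw [hm]; exact hc⟩
  have : (w : ℤ) ≤ (L : ℤ) := by exact_mod_cast hwL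
  omega

lemma good_of_check (p q : ℕ) (w : ℤ) (A : Finset ℤ) (hq : 1 ≤ q)
    (hA : A ⊆ Finset.Icc 0 (w - 1))
    (hchk : ∀ f ∈ Finset.Icc (1 : ℤ) w, ¬((p : ℤ) * f ∈ A - A ∧ (q : ℤ) * f ∈ A - A)) :
    Good p q A := by
  have hq1 : (1 : ℤ) ≤ (q : ℤ) := by exact_mod_cast hq
  have key : ∀ f : ℤ, 0 < f → (p : ℤ) * f ∈ A - A → (q : ℤ) * f ∈ A - A → False := by
    intro f hf h1 h2
    have hb := sub_boundF hA h2
    have hle : 1 * f ≤ (q : ℤ) * f := mul_le_mul_of_nonneg_right hq1 (by omega)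
    refine hchk f (Finset.mem_Icc.mpr ⟨by omega, ?_⟩) ⟨h1, h2⟩
    have := hb.2
    linarith
  intro f h1 h2
  rcases lt_trichotomy f 0 with hf | hf | hf
  · exfalso
    refine key (-f) (by omega) ?_ ?_
    · rw [mul_neg]; exact neg_mem_subF h1
    · rw [mul_neg]; exact neg_mem_subF h2
  · exact hf
  · exact absurd (key f hf h1 h2) not_false

lemma Pg_comp2 (p q aa bb L M : ℕ) (hq : 1 ≤ q) (hqp : q < p)
    (cop : IsCoprime (p : ℤ) (q : ℤ)) (hM : (p + q) * (p - 1) < M) (hwL : M + p ≤ L)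
    (hc : L ^ aa ≤ (2 * p) ^ bb) : Pg p q aa bb L := by
  have hp2 : 2 ≤ p := by omega
  have hp1Z : (1 : ℤ) ≤ (p : ℤ) := by exact_mod_cast (by omega : 1 ≤ p)
  have hMZ : ((p : ℤ) + q) * ((p : ℤ) - 1) < (M : ℤ) := by
    have h0 : (((p + q) * (p - 1) : ℕ) : ℤ) < (M : ℤ) := by exact_mod_cast hM
    rwa [Nat.cast_mul, Nat.cast_add, Nat.cast_sub (by omega : 1 ≤ p), Nat.cast_one] at h0
  have hT2 : Finset.Icc (0 : ℤ) 1 = Finset.Icc (0 : ℤ) ((2 : ℤ) - 1) := by norm_num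
  refine ⟨comp (M : ℤ) (Finset.Icc 0 ((p : ℤ) - 1)) (Finset.Icc 0 1), ?_, ?_, ?_⟩
  · apply good_comp hq hqp cop (Finset.Subset.refl _) hp1Z hMZ
      (good_interval p q p hp1Z le_rfl)
    rw [hT2]
    exact good_interval p q 2 (by norm_num) (by exact_mod_cast hp2)
  · have hsub := comp_subset (Finset.Subset.refl (Finset.Icc 0 ((p : ℤ) - 1)))
      (Finset.Subset.refl (Finset.Icc 0 ((2 : ℤ) - 1))) (by positivity : (0:ℤ) ≤ (M:ℤ))
    simp only [show ((2:ℤ) - 1) = 1 by norm_num] at hsub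
    refine hsub.trans (Finset.Icc_subset_Icc le_rfl ?_)
    have : (M : ℤ) + p ≤ (L : ℤ) := by exact_mod_cast hwL
    linarith
  · have hcard : (comp (M : ℤ) (Finset.Icc 0 ((p : ℤ) - 1)) (Finset.Icc 0 1)).card
        = p * 2 := by
      rw [comp_card (Finset.Subset.refl _) (by
          have h3 : 3 * (p - 1) ≤ (p + q) * (p - 1) := Nat.mul_le_mul_right _ (by omega)
          have h4 : p ≤ M := by omega
          exact_mod_cast h4) hp1Z]
      rw [card_IccZ p]
      simp [Int.card_Icc]
    rw [hcard, show p * 2 = 2 * p by ring]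
    exact hc

lemma step_of_crit (aa pb B L₀ p : ℕ) (hp : 1 ≤ p) (hpL : p ≤ L₀ + 1)
    (hcrit : B ^ aa * (L₀ + 1) ^ aa ≤ pb * (L₀ + 2 - p) ^ aa) :
    ∀ L, L₀ < L → B ^ aa * L ^ aa ≤ pb * (L + 1 - p) ^ aa := by
  intro L hL
  have hbridge : (L₀ + 2 - p) * L ≤ (L + 1 - p) * (L₀ + 1) := by
    have hz : ((L₀ + 2 - p : ℕ) : ℤ) * (L : ℤ) ≤ ((L + 1 - p : ℕ) : ℤ) * ((L₀ : ℤ) + 1) := by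
      rw [Nat.cast_sub (by omega), Nat.cast_sub (by omega)]
      push_cast
      nlinarith [(by exact_mod_cast hp : (1:ℤ) ≤ (p:ℤ)),
        (by exact_mod_cast hL : (L₀ : ℤ) < (L : ℤ))]
    exact_mod_cast hz
  have h2 : (B ^ aa * L ^ aa) * (L₀ + 1) ^ aa ≤ (pb * (L + 1 - p) ^ aa) * (L₀ + 1) ^ aa := by
    calc (B ^ aa * L ^ aa) * (L₀ + 1) ^ aa
        = (B ^ aa * (L₀ + 1) ^ aa) * L ^ aa := by ring
      _ ≤ (pb * (L₀ + 2 - p) ^ aa) * L ^ aa := Nat.mul_le_mul_right _ hcrit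
      _ = pb * ((L₀ + 2 - p) * L) ^ aa := by rw [mul_pow]; ring
      _ ≤ pb * ((L + 1 - p) * (L₀ + 1)) ^ aa :=
          Nat.mul_le_mul_left _ (Nat.pow_le_pow_left hbridge _)
      _ = (pb * (L + 1 - p) ^ aa) * (L₀ + 1) ^ aa := by rw [mul_pow]; ring
  exact Nat.le_of_mul_le_mul_right h2 (by positivity)

/-- Main recursive construction: if for every `L` we either directly have a
good set or the numerical step condition holds, then good sets exist for every `L`. -/
lemma exists_Pg (aa bb p q B : ℕ) (hq : 1 ≤ q) (hqp : q < p)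
    (cop : IsCoprime (p : ℤ) (q : ℤ)) (hB : B = (p + q) * (p - 1) + 1)
    (hcov : ∀ L, 1 ≤ L → Pg p q aa bb L ∨
      (p ≤ L ∧ B ^ aa * L ^ aa ≤ p ^ bb * (L + 1 - p) ^ aa)) :
    ∀ L, 1 ≤ L → Pg p q aa bb L := by
  have hp2 : 2 ≤ p := by omega
  have hB4 : 4 ≤ B := by
    have h3 : 3 * 1 ≤ (p + q) * (p - 1) :=
      Nat.mul_le_mul (by omega) (by omega)
    omega
  have hpB : p ≤ B := by
    have h3 : 3 * (p - 1) ≤ (p + q) * (p - 1) :=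
      Nat.mul_le_mul_right _ (by omega)
    omega
  suffices H : ∀ N L, L ≤ N → 1 ≤ L → Pg p q aa bb L by
    exact fun L hL => H L L le_rfl hL
  intro N
  induction N with
  | zero => intro L h h1; omega
  | succ N IH =>
    intro L hLN hL1
    rcases hcov L hL1 with h | ⟨hpL, hstep⟩
    · exact h
    have hB0 : 0 < B := by omega
    obtain ⟨t, u, h1, h2⟩ : ∃ t u, B * t + u = L - p ∧ u < B :=
      ⟨(L - p) / B, (L - p) % B, Nat.div_add_mod _ _, Nat.mod_lt _ hB0⟩
    have hle : t ≤ B * t := Nat.le_mul_of_pos_left t hB0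
    -- generalize the product
    obtain ⟨v, hv⟩ : ∃ v, v = B * t := ⟨_, rfl⟩
    rw [← hv] at h1 hle
    have hL't : t + 1 < L := by omega
    obtain ⟨A', hgA', hsubA', hcardA'⟩ := IH (t + 1) (by omega) (by omega)
    refine ⟨comp (B : ℤ) (Finset.Icc 0 ((p : ℤ) - 1)) A', ?_, ?_, ?_⟩
    · apply good_comp hq hqp cop (Finset.Subset.refl _)
        (by exact_mod_cast (by omega : 1 ≤ p))
        ?_ (good_interval p q p (by exact_mod_cast (by omega : 1 ≤ p)) le_rfl) hgA'
      have hBz : ((((p + q) * (p - 1) + 1 : ℕ)) : ℤ) = (B : ℤ) := by rw [← hB]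
      rw [Nat.cast_add, Nat.cast_mul, Nat.cast_add, Nat.cast_sub (by omega : 1 ≤ p)] at hBz
      push_cast at hBz ⊢
      linarith
    · have hsub := comp_subset (Finset.Subset.refl (Finset.Icc 0 ((p : ℤ) - 1)))
        hsubA' (by positivity : (0:ℤ) ≤ (B:ℤ))
      refine hsub.trans (Finset.Icc_subset_Icc le_rfl ?_)
      -- (p-1) + B * ((t+1) - 1) ≤ L - 1
      have hvz : ((v : ℕ) : ℤ) = (B : ℤ) * (t : ℤ) := by rw [hv]; push_cast; ring
      have h1z : (v : ℤ) + (u : ℤ) = (L : ℤ) - (p : ℤ) := by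
        have : ((v + u : ℕ) : ℤ) = ((L - p : ℕ) : ℤ) := by rw [h1]
        rw [Nat.cast_add, Nat.cast_sub hpL] at this
        exact this
      have hcast : (((t : ℕ) + 1 : ℕ) : ℤ) - 1 = (t : ℤ) := by push_cast; ring
      rw [hcast]
      have hpz : (1 : ℤ) ≤ (p : ℤ) := by exact_mod_cast (by omega : 1 ≤ p)
      linarith [hvz ▸ h1z, (by exact_mod_cast (Nat.zero_le u) : (0:ℤ) ≤ (u:ℤ))]
    · have hcard : (comp (B : ℤ) (Finset.Icc 0 ((p : ℤ) - 1)) A').card = p * A'.card := by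
        rw [comp_card (Finset.Subset.refl _) (by exact_mod_cast hpB)
          (by exact_mod_cast (by omega : 1 ≤ p)), card_IccZ]
      rw [hcard]
      -- L^aa ≤ (p * A'.card)^bb
      have hLB : L + 1 - p ≤ B * (t + 1) := by
        rw [Nat.mul_succ, ← hv]
        omega
      have hchain : B ^ aa * L ^ aa ≤ B ^ aa * (p ^ bb * (t + 1) ^ aa) :=
        calc B ^ aa * L ^ aa ≤ p ^ bb * (L + 1 - p) ^ aa := hstep
          _ ≤ p ^ bb * (B * (t + 1)) ^ aa :=
              Nat.mul_le_mul_left _ (Nat.pow_le_pow_left hLB _)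
          _ = B ^ aa * (p ^ bb * (t + 1) ^ aa) := by rw [mul_pow]; ring
      have hmain : L ^ aa ≤ p ^ bb * (t + 1) ^ aa :=
        Nat.le_of_mul_le_mul_left hchain (by positivity)
      calc L ^ aa ≤ p ^ bb * (t + 1) ^ aa := hmain
        _ ≤ p ^ bb * A'.card ^ bb := Nat.mul_le_mul_left _ hcardA'
        _ = (p * A'.card) ^ bb := (mul_pow _ _ _).symm

/-- The simple criterion `(B+p-1)^aa ≤ p^bb` suffices for the covering condition. -/
lemma cover_of_crit (aa bb p q B : ℕ) (hab : aa ≤ bb) (hq : 1 ≤ q)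
    (hqp : q < p) (hB : B = (p + q) * (p - 1) + 1) (hcrit : (B + p - 1) ^ aa ≤ p ^ bb) :
    ∀ L, 1 ≤ L → Pg p q aa bb L ∨
      (p ≤ L ∧ B ^ aa * L ^ aa ≤ p ^ bb * (L + 1 - p) ^ aa) := by
  intro L hL
  have hp2 : 2 ≤ p := by omega
  have hB4 : 4 ≤ B := by
    have h3 : 3 * 1 ≤ (p + q) * (p - 1) := Nat.mul_le_mul (by omega) (by omega)
    omega
  by_cases hc : L ^ aa ≤ p ^ bb
  · left
    exact Pg_interval_range p q aa bb L L hab (by omega) hL le_rfl hc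
  · right
    push_neg at hc
    have hpL : p < L := by
      by_contra hcon
      push_neg at hcon
      exact absurd (le_trans (Nat.pow_le_pow_left hcon aa)
        (Nat.pow_le_pow_right (by omega) hab)) (not_le.mpr hc)
    have hBL : B + p - 1 < L := by
      by_contra hcon
      push_neg at hcon
      exact absurd (le_trans (Nat.pow_le_pow_left hcon aa) hcrit) (not_le.mpr hc)
    refine ⟨le_of_lt hpL, ?_⟩
    refine step_of_crit aa (p ^ bb) B (B + p - 1) p (by omega) (by omega) ?_ L (by omega)
    have e1 : B + p - 1 + 1 = B + p := by omega
    have e2 : B + p - 1 + 2 - p = B + 1 := by omega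
    rw [e1, e2]
    calc B ^ aa * (B + p) ^ aa = (B * (B + p)) ^ aa := (mul_pow _ _ _).symm
      _ ≤ ((B + p - 1) * (B + 1)) ^ aa := by
          apply Nat.pow_le_pow_left
          zify [show 1 ≤ B + p from by omega]
          nlinarith [(by exact_mod_cast hp2 : (2:ℤ) ≤ (p:ℤ)),
            (by exact_mod_cast hB4 : (4:ℤ) ≤ (B:ℤ))]
      _ = (B + p - 1) ^ aa * (B + 1) ^ aa := mul_pow _ _ _
      _ ≤ p ^ bb * (B + 1) ^ aa := Nat.mul_le_mul_right _ hcrit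

lemma all21 : ∀ L, 1 ≤ L → Pg 2 1 11 25 L := by
  apply exists_Pg 11 25 2 1 4 (by norm_num) (by norm_num) (copZ 2 1 (by norm_num)) (by norm_num)
  intro L hL
  rcases le_or_gt L 4 with h | h
  · exact Or.inl (Pg_interval_range 2 1 11 25 L 4 (by norm_num) (by norm_num) hL h (by norm_num))
  rcases le_or_gt L 5 with h2 | h2
  · refine Or.inl (Pg_of_set 2 1 11 25 L 5 3 ({0,1,4} : Finset ℤ) ?_ (by decide) (by omega)
      (by decide) (le_trans (Nat.pow_le_pow_left h2 11) (by norm_num)))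
    exact good_of_check 2 1 5 _ (by norm_num) (by decide) (by decide)
  · exact Or.inr ⟨by omega,
      step_of_crit 11 (2^25) 4 5 2 (by norm_num) (by norm_num) (by norm_num) L (by omega)⟩

lemma all32 : ∀ L, 1 ≤ L → Pg 3 2 11 25 L := by
  apply exists_Pg 11 25 3 2 11 (by norm_num) (by norm_num) (copZ 3 2 (by norm_num)) (by norm_num)
  intro L hL
  rcases le_or_gt L 12 with h | h
  · exact Or.inl (Pg_interval_range 3 2 11 25 L 12 (by norm_num) (by norm_num) hL h (by norm_num))
  rcases le_or_gt L 21 with h2 | h2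
  · refine Or.inl (Pg_of_set 3 2 11 25 L 12 4 ({0,1,2,11} : Finset ℤ) ?_ (by decide) (by omega)
      (by decide) (le_trans (Nat.pow_le_pow_left h2 11) (by norm_num)))
    exact good_of_check 3 2 12 _ (by norm_num) (by decide) (by decide)
  · exact Or.inr ⟨by omega,
      step_of_crit 11 (3^25) 11 21 3 (by norm_num) (by norm_num) (by norm_num) L (by omega)⟩

lemma all43 : ∀ L, 1 ≤ L → Pg 4 3 11 25 L := by
  apply exists_Pg 11 25 4 3 22 (by norm_num) (by norm_num) (copZ 4 3 (by norm_num)) (by norm_num)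
  intro L hL
  rcases le_or_gt L 23 with h | h
  · exact Or.inl (Pg_interval_range 4 3 11 25 L 23 (by norm_num) (by norm_num) hL h (by norm_num))
  rcases le_or_gt L 38 with h2 | h2
  · refine Or.inl (Pg_of_set 4 3 11 25 L 12 5 ({0,1,2,3,11} : Finset ℤ) ?_ (by decide) (by omega)
      (by decide) (le_trans (Nat.pow_le_pow_left h2 11) (by norm_num)))
    exact good_of_check 4 3 12 _ (by norm_num) (by decide) (by decide)
  rcases le_or_gt L 51 with h3 | h3
  · exact Or.inl (Pg_comp2 4 3 11 25 L 22 (by norm_num) (by norm_num) (copZ 4 3 (by norm_num))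
      (by norm_num) (by omega) (le_trans (Nat.pow_le_pow_left h3 11) (by norm_num)))
  · exact Or.inr ⟨by omega,
      step_of_crit 11 (4^25) 22 51 4 (by norm_num) (by norm_num) (by norm_num) L (by omega)⟩

lemma all54 : ∀ L, 1 ≤ L → Pg 5 4 11 25 L := by
  apply exists_Pg 11 25 5 4 37 (by norm_num) (by norm_num) (copZ 5 4 (by norm_num)) (by norm_num)
  intro L hL
  rcases le_or_gt L 38 with h | h
  · exact Or.inl (Pg_interval_range 5 4 11 25 L 38 (by norm_num) (by norm_num) hL h (by norm_num))
  rcases le_or_gt L 58 with h2 | h2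
  · refine Or.inl (Pg_of_set 5 4 11 25 L 18 6 ({0,1,2,3,4,17} : Finset ℤ) ?_ (by decide) (by omega)
      (by decide) (le_trans (Nat.pow_le_pow_left h2 11) (by norm_num)))
    exact good_of_check 5 4 18 _ (by norm_num) (by decide) (by decide)
  rcases le_or_gt L 87 with h3 | h3
  · exact Or.inl (Pg_comp2 5 4 11 25 L 37 (by norm_num) (by norm_num) (copZ 5 4 (by norm_num))
      (by norm_num) (by omega) (le_trans (Nat.pow_le_pow_left h3 11) (by norm_num)))
  · exact Or.inr ⟨by omega,
      step_of_crit 11 (5^25) 37 87 5 (by norm_num) (by norm_num) (by norm_num) L (by omega)⟩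

lemma all65 : ∀ L, 1 ≤ L → Pg 6 5 11 25 L := by
  apply exists_Pg 11 25 6 5 56 (by norm_num) (by norm_num) (copZ 6 5 (by norm_num)) (by norm_num)
  intro L hL
  rcases le_or_gt L 58 with h | h
  · exact Or.inl (Pg_interval_range 6 5 11 25 L 58 (by norm_num) (by norm_num) hL h (by norm_num))
  rcases le_or_gt L 83 with h2 | h2
  · refine Or.inl (Pg_of_set 6 5 11 25 L 17 7 ({0,1,2,3,4,5,16} : Finset ℤ) ?_ (by decide)
      (by omega) (by decide) (le_trans (Nat.pow_le_pow_left h2 11) (by norm_num)))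
    exact good_of_check 6 5 17 _ (by norm_num) (by decide) (by decide)
  rcases le_or_gt L 109 with h3 | h3
  · exact Or.inl (Pg_comp2 6 5 11 25 L 56 (by norm_num) (by norm_num) (copZ 6 5 (by norm_num))
      (by norm_num) (by omega) (le_trans (Nat.pow_le_pow_left h3 11) (by norm_num)))
  · exact Or.inr ⟨by omega,
      step_of_crit 11 (6^25) 56 109 6 (by norm_num) (by norm_num) (by norm_num) L (by omega)⟩

lemma all76 : ∀ L, 1 ≤ L → Pg 7 6 11 25 L := by
  apply exists_Pg 11 25 7 6 79 (by norm_num) (by norm_num) (copZ 7 6 (by norm_num)) (by norm_num)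
  intro L hL
  rcases le_or_gt L 83 with h | h
  · exact Or.inl (Pg_interval_range 7 6 11 25 L 83 (by norm_num) (by norm_num) hL h (by norm_num))
  rcases le_or_gt L 112 with h2 | h2
  · refine Or.inl (Pg_of_set 7 6 11 25 L 20 8 ({0,1,2,3,4,5,6,19} : Finset ℤ) ?_ (by decide)
      (by omega) (by decide) (le_trans (Nat.pow_le_pow_left h2 11) (by norm_num)))
    exact good_of_check 7 6 20 _ (by norm_num) (by decide) (by decide)
  rcases le_or_gt L 116 with h3 | h3
  · exact Or.inl (Pg_comp2 7 6 11 25 L 79 (by norm_num) (by norm_num) (copZ 7 6 (by norm_num))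
      (by norm_num) (by omega) (le_trans (Nat.pow_le_pow_left h3 11) (by norm_num)))
  · exact Or.inr ⟨by omega,
      step_of_crit 11 (7^25) 79 116 7 (by norm_num) (by norm_num) (by norm_num) L (by omega)⟩

lemma all87 : ∀ L, 1 ≤ L → Pg 8 7 11 25 L := by
  apply exists_Pg 11 25 8 7 106 (by norm_num) (by norm_num) (copZ 8 7 (by norm_num)) (by norm_num)
  intro L hL
  rcases le_or_gt L 112 with h | h
  · exact Or.inl (Pg_interval_range 8 7 11 25 L 112 (by norm_num) (by norm_num) hL h (by norm_num))
  rcases le_or_gt L 115 with h2 | h2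
  · refine Or.inl (Pg_of_set 8 7 11 25 L 23 9 ({0,1,2,3,4,5,6,7,22} : Finset ℤ) ?_ (by decide)
      (by omega) (by decide) (le_trans (Nat.pow_le_pow_left h2 11) (by norm_num)))
    exact good_of_check 8 7 23 _ (by norm_num) (by decide) (by decide)
  · exact Or.inr ⟨by omega,
      step_of_crit 11 (8^25) 106 115 8 (by norm_num) (by norm_num) (by norm_num) L (by omega)⟩

lemma exists44 (p q : ℕ) (hq : 1 ≤ q) (hqp : q < p) (cop : Nat.Coprime p q) :
    ∀ L, 1 ≤ L → Pg p q 11 25 L := by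
  by_cases h13 : 13 ≤ p
  · apply exists_Pg 11 25 p q ((p + q) * (p - 1) + 1) hq hqp (copZ p q cop) rfl
    apply cover_of_crit 11 25 p q _ (by norm_num) hq hqp rfl
    have e0 : (p + q) * (p - 1) + 1 + p - 1 = (p + q) * (p - 1) + p := by omega
    have h2 : (p + q) * (p - 1) ≤ (2 * p - 1) * p := Nat.mul_le_mul (by omega) (by omega)
    have h1 : (p + q) * (p - 1) + p ≤ 2 * p * p := by
      calc (p + q) * (p - 1) + p ≤ (2 * p - 1) * p + p := Nat.add_le_add_right h2 p
        _ = ((2 * p - 1) + 1) * p := (add_one_mul _ _).symm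
        _ = 2 * p * p := by rw [show (2 * p - 1) + 1 = 2 * p from by omega]
    rw [e0]
    calc ((p + q) * (p - 1) + p) ^ 11 ≤ (2 * p * p) ^ 11 :=
          Nat.pow_le_pow_left h1 11
      _ = 2 ^ 11 * p ^ 22 := by ring
      _ ≤ p ^ 3 * p ^ 22 := by
          apply Nat.mul_le_mul_right
          calc 2 ^ 11 ≤ 13 ^ 3 := by norm_num
            _ ≤ p ^ 3 := Nat.pow_le_pow_left h13 3
      _ = p ^ 25 := by ring
  · push_neg at h13
    have hp2 : 2 ≤ p := by omega
    have hp12 : p ≤ 12 := by omega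
    have hq11 : q ≤ 11 := by omega
    interval_cases p <;> interval_cases q <;>
      first
        | (exfalso; revert cop; decide)
        | exact all21
        | exact all32
        | exact all43
        | exact all54
        | exact all65
        | exact all76
        | exact all87
        | exact exists_Pg 11 25 _ _ _ hq hqp (copZ _ _ cop) rfl
            (cover_of_crit 11 25 _ _ _ (by norm_num) hq hqp rfl (by norm_num))

lemma exists499 (p q : ℕ) (hq : 1 ≤ q) (hqp : q < p) (cop : Nat.Coprime p q)
    (hbig : 2 ^ 500 ≤ p) : ∀ L, 1 ≤ L → Pg p q 499 1000 L := by
  apply exists_Pg 499 1000 p q ((p + q) * (p - 1) + 1) hq hqp (copZ p q cop) rfl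
  apply cover_of_crit 499 1000 p q _ (by norm_num) hq hqp rfl
  have e0 : (p + q) * (p - 1) + 1 + p - 1 = (p + q) * (p - 1) + p := by omega
  have h2 : (p + q) * (p - 1) ≤ (2 * p - 1) * p := Nat.mul_le_mul (by omega) (by omega)
  have h1 : (p + q) * (p - 1) + p ≤ 2 * p * p := by
    calc (p + q) * (p - 1) + p ≤ (2 * p - 1) * p + p := Nat.add_le_add_right h2 p
      _ = ((2 * p - 1) + 1) * p := (add_one_mul _ _).symm
      _ = 2 * p * p := by rw [show (2 * p - 1) + 1 = 2 * p from by omega]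
  have hp1 : 1 ≤ p := by omega
  rw [e0]
  calc ((p + q) * (p - 1) + p) ^ 499 ≤ (2 * p * p) ^ 499 :=
        Nat.pow_le_pow_left h1 499
    _ = 2 ^ 499 * p ^ 998 := by ring
    _ ≤ p ^ 2 * p ^ 998 := by
        apply Nat.mul_le_mul_right
        calc 2 ^ 499 ≤ 2 ^ 500 := Nat.pow_le_pow_right (by norm_num) (by norm_num)
          _ ≤ p := hbig
          _ = p ^ 1 := (pow_one p).symm
          _ ≤ p ^ 2 := Nat.pow_le_pow_right hp1 (by norm_num)
    _ = p ^ 1000 := by ring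

lemma rpow_bound (aa bb : ℕ) (r : ℝ) (hbb : bb ≠ 0) (hr : r * bb = aa) (hr0 : 0 ≤ r)
    {L m : ℕ} (h : L ^ aa ≤ m ^ bb) : (L : ℝ) ^ r ≤ (m : ℝ) := by
  have h0 : (0 : ℝ) ≤ (L : ℝ) := Nat.cast_nonneg L
  have h0m : (0 : ℝ) ≤ (m : ℝ) := Nat.cast_nonneg m
  have h' : ((L : ℝ) ^ (aa : ℕ)) ≤ ((m : ℝ) ^ (bb : ℕ)) := by exact_mod_cast h
  have e1 : (L : ℝ) ^ r = ((L : ℝ) ^ (aa : ℕ)) ^ ((1 : ℝ) / bb) := by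
    rw [← Real.rpow_natCast (L : ℝ) aa, ← Real.rpow_mul h0]
    congr 1
    field_simp
    linarith [hr]
  have e2 : ((m : ℝ) ^ (bb : ℕ)) ^ ((1 : ℝ) / bb) = (m : ℝ) := by
    rw [← Real.rpow_natCast (m : ℝ) bb, ← Real.rpow_mul h0m]
    rw [show (bb : ℝ) * (1 / bb) = 1 by field_simp]
    exact Real.rpow_one _
  rw [e1, ← e2]
  exact Real.rpow_le_rpow (by positivity) h' (by positivity)


/-- Let `a, b, c` be integers, `L ≥ 1`, and `(i₁, j₁, k₁)` an integer solution of
`i·a + j·b + k·c = 0` with `1 ≤ |i₁| < |j₁|`, such that every integer solution in `{−L,…,L}³`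
is a rational multiple of `(i₁, j₁, k₁)`. Then there is `A ⊆ [L]` with `|A| ≥ L^{0.44}` such
that the only triple of `(A−A)³` solving the equation is `(0,0,0)`; moreover if
`|j₁|/gcd(|i₁|,|j₁|) > e^{1000}` then `A` can be chosen with `|A| ≥ L^{0.499}`. -/
theorem statement13 (a b c : ℤ) (L : ℕ) (hL : 1 ≤ L) (i₁ j₁ k₁ : ℤ)
    (hsol : i₁ * a + j₁ * b + k₁ * c = 0)
    (hi₁ : 1 ≤ |i₁|) (hij : |i₁| < |j₁|)
    (honly : ∀ i j k : ℤ, |i| ≤ (L : ℤ) → |j| ≤ (L : ℤ) → |k| ≤ (L : ℤ) →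
      i * a + j * b + k * c = 0 →
      ∃ t : ℚ, (i : ℚ) = t * (i₁ : ℚ) ∧ (j : ℚ) = t * (j₁ : ℚ) ∧ (k : ℚ) = t * (k₁ : ℚ)) :
    (∃ A : Finset ℤ, A ⊆ Finset.Icc 1 (L : ℤ) ∧
      (L : ℝ) ^ (0.44 : ℝ) ≤ A.card ∧
      ∀ x₁ y₁ x₂ y₂ x₃ y₃ : ℤ, x₁ ∈ A → y₁ ∈ A → x₂ ∈ A → y₂ ∈ A → x₃ ∈ A → y₃ ∈ A →
        (x₁ - y₁) * a + (x₂ - y₂) * b + (x₃ - y₃) * c = 0 →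
        x₁ = y₁ ∧ x₂ = y₂ ∧ x₃ = y₃) ∧
    (Real.exp 1000 < ((|j₁| : ℤ) : ℝ) / (Int.gcd i₁ j₁ : ℝ) →
      ∃ A : Finset ℤ, A ⊆ Finset.Icc 1 (L : ℤ) ∧
        (L : ℝ) ^ (0.499 : ℝ) ≤ A.card ∧
        ∀ x₁ y₁ x₂ y₂ x₃ y₃ : ℤ, x₁ ∈ A → y₁ ∈ A → x₂ ∈ A → y₂ ∈ A → x₃ ∈ A → y₃ ∈ A →
          (x₁ - y₁) * a + (x₂ - y₂) * b + (x₃ - y₃) * c = 0 →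
          x₁ = y₁ ∧ x₂ = y₂ ∧ x₃ = y₃) := by
  have hi₁ne : i₁ ≠ 0 := by
    intro h
    rw [h] at hi₁
    simp at hi₁
  set g : ℕ := Int.gcd i₁ j₁ with hgdef
  have hg0 : 0 < g := Int.gcd_pos_iff.mpr (Or.inl hi₁ne)
  obtain ⟨q', hq'⟩ : ((g : ℤ)) ∣ i₁ := Int.gcd_dvd_left _ _
  obtain ⟨p', hp'⟩ : ((g : ℤ)) ∣ j₁ := Int.gcd_dvd_right _ _
  have hq'0 : q' ≠ 0 := by
    intro h
    rw [h, mul_zero] at hq'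
    exact hi₁ne hq'
  have hgZ : (g : ℤ) ≠ 0 := by exact_mod_cast hg0.ne'
  have hcop1 : Int.gcd q' p' = 1 := by
    have h2 : Int.gcd i₁ j₁ = g * Int.gcd q' p' := by
      rw [hq', hp', Int.gcd_mul_left]
      simp
    rw [← hgdef] at h2
    have := mul_left_cancel₀ (by omega : g ≠ 0) (by rw [mul_one]; exact h2.symm : g * Int.gcd q' p' = g * 1)
    exact this
  set q : ℕ := q'.natAbs with hqdef
  set p : ℕ := p'.natAbs with hpdef
  have hq1 : 1 ≤ q := Int.natAbs_pos.mpr hq'0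
  have habs_i : i₁.natAbs = g * q := by rw [hq', Int.natAbs_mul]; simp [hqdef]
  have habs_j : j₁.natAbs = g * p := by rw [hp', Int.natAbs_mul]; simp [hpdef]
  have hqp : q < p := by
    have h1 : i₁.natAbs < j₁.natAbs := by
      have h2 : (i₁.natAbs : ℤ) < (j₁.natAbs : ℤ) := by
        rw [← Int.abs_eq_natAbs, ← Int.abs_eq_natAbs]
        exact hij
      exact_mod_cast h2
    rw [habs_i, habs_j] at h1
    exact Nat.lt_of_mul_lt_mul_left h1
  have copN : Nat.Coprime p q := by
    have h1 : Nat.gcd q p = 1 := hcop1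
    exact (Nat.coprime_comm.mp h1)
  -- the key triviality property from goodness
  have key : ∀ A : Finset ℤ, A ⊆ Finset.Icc 1 (L : ℤ) → Good p q A →
      ∀ x₁ y₁ x₂ y₂ x₃ y₃ : ℤ, x₁ ∈ A → y₁ ∈ A → x₂ ∈ A → y₂ ∈ A → x₃ ∈ A → y₃ ∈ A →
      (x₁ - y₁) * a + (x₂ - y₂) * b + (x₃ - y₃) * c = 0 →
      x₁ = y₁ ∧ x₂ = y₂ ∧ x₃ = y₃ := by
    intro A hsub hgood x₁ y₁ x₂ y₂ x₃ y₃ hx₁ hy₁ hx₂ hy₂ hx₃ hy₃ heq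
    have hbnd : ∀ x y : ℤ, x ∈ A → y ∈ A → |x - y| ≤ (L : ℤ) := by
      intro x y hx hy
      have h1 := Finset.mem_Icc.mp (hsub hx)
      have h2 := Finset.mem_Icc.mp (hsub hy)
      rw [abs_le]
      omega
    obtain ⟨t, ht1, ht2, ht3⟩ := honly _ _ _ (hbnd _ _ hx₁ hy₁) (hbnd _ _ hx₂ hy₂)
      (hbnd _ _ hx₃ hy₃) heq
    have hcross : (x₁ - y₁) * j₁ = (x₂ - y₂) * i₁ := by
      have hQ : ((x₁ - y₁ : ℤ) : ℚ) * ((j₁ : ℤ) : ℚ) = ((x₂ - y₂ : ℤ) : ℚ) * ((i₁ : ℤ) : ℚ) := by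
        rw [ht1, ht2]
        ring
      exact_mod_cast hQ
    have hdiv : (x₁ - y₁) * p' = (x₂ - y₂) * q' := by
      apply mul_left_cancel₀ hgZ
      have h3 : (x₁ - y₁) * ((g : ℤ) * p') = (x₂ - y₂) * ((g : ℤ) * q') := by
        rw [← hp', ← hq']
        exact hcross
      linear_combination h3
    have copQP : IsCoprime q' p' := Int.isCoprime_iff_gcd_eq_one.mpr hcop1
    have hq'dvd : q' ∣ (x₁ - y₁) := copQP.dvd_of_dvd_mul_right ⟨x₂ - y₂, by linear_combination hdiv⟩
    obtain ⟨f, hf⟩ := hq'dvd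
    have hd2 : x₂ - y₂ = p' * f := by
      apply mul_left_cancel₀ hq'0
      rw [hf] at hdiv
      linear_combination -hdiv
    have hm1 : x₁ - y₁ ∈ A - A := Finset.sub_mem_sub hx₁ hy₁
    have hm2 : x₂ - y₂ ∈ A - A := Finset.sub_mem_sub hx₂ hy₂
    have hpabs : p' = (p : ℤ) ∨ p' = -(p : ℤ) := by
      rw [hpdef]
      exact Int.natAbs_eq p'
    have hqabs : q' = (q : ℤ) ∨ q' = -(q : ℤ) := by
      rw [hqdef]
      exact Int.natAbs_eq q'
    have hf0 : f = 0 := by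
      apply hgood f
      · rcases hpabs with h | h
        · have e : (p : ℤ) * f = x₂ - y₂ := by rw [hd2, h]
          rw [e]
          exact hm2
        · have e : (p : ℤ) * f = -(x₂ - y₂) := by rw [hd2, h]; ring
          rw [e]
          exact neg_mem_subF hm2
      · rcases hqabs with h | h
        · have e : (q : ℤ) * f = x₁ - y₁ := by rw [hf, h]
          rw [e]
          exact hm1
        · have e : (q : ℤ) * f = -(x₁ - y₁) := by rw [hf, h]; ring
          rw [e]
          exact neg_mem_subF hm1
    constructor
    · have : x₁ - y₁ = 0 := by rw [hf, hf0, mul_zero]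
      omega
    constructor
    · have : x₂ - y₂ = 0 := by rw [hd2, hf0, mul_zero]
      omega
    · have hd10 : x₁ - y₁ = 0 := by rw [hf, hf0, mul_zero]
      have ht0 : t = 0 := by
        have hz : ((x₁ - y₁ : ℤ) : ℚ) = 0 := by rw [hd10]; norm_num
        rw [hz] at ht1
        have hi₁Q : ((i₁ : ℤ) : ℚ) ≠ 0 := by exact_mod_cast hi₁ne
        rcases mul_eq_zero.mp ht1.symm with h | h
        · exact h
        · exact absurd h hi₁Q
      have hz3 : ((x₃ - y₃ : ℤ) : ℚ) = 0 := by rw [ht3, ht0]; ring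
      have : x₃ - y₃ = 0 := by exact_mod_cast hz3
      omega
  constructor
  · obtain ⟨A₀, hgA, hsubA, hcard⟩ := exists44 p q hq1 hqp copN L hL
    have hsub1 : A₀.image (· + 1) ⊆ Finset.Icc 1 (L : ℤ) := by
      intro x hx
      simp only [Finset.mem_image] at hx
      obtain ⟨y, hy, rfl⟩ := hx
      have hy2 := Finset.mem_Icc.mp (hsubA hy)
      rw [Finset.mem_Icc]
      omega
    refine ⟨A₀.image (· + 1), hsub1, ?_, key _ hsub1 (good_image_add hgA 1)⟩
    rw [Finset.card_image_of_injective _ (add_left_injective 1)]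
    exact rpow_bound 11 25 0.44 (by norm_num) (by norm_num) (by norm_num) hcard
  · intro hexp
    have hgne : (g : ℝ) ≠ 0 := by
      have : (0:ℝ) < (g:ℝ) := by exact_mod_cast hg0
      linarith
    have hval : ((|j₁| : ℤ) : ℝ) / ((g : ℕ) : ℝ) = (p : ℝ) := by
      rw [Int.abs_eq_natAbs, habs_j]
      push_cast
      field_simp
    rw [hval] at hexp
    have h2e : (2 : ℝ) ^ (500 : ℕ) ≤ Real.exp 1000 := by
      have h1 : (2 : ℝ) ≤ Real.exp 2 := by
        have ha := Real.add_one_le_exp (1 : ℝ)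
        have hb : Real.exp 1 ≤ Real.exp 2 := Real.exp_le_exp.mpr (by norm_num)
        linarith
      calc (2 : ℝ) ^ (500 : ℕ) ≤ (Real.exp 2) ^ (500 : ℕ) :=
            pow_le_pow_left₀ (by norm_num) h1 500
        _ = Real.exp (500 * 2) := (Real.exp_nat_mul 2 500).symm
        _ = Real.exp 1000 := by norm_num
    have hple : (2 : ℝ) ^ (500 : ℕ) < (p : ℝ) := lt_of_le_of_lt h2e hexp
    have hpbig : 2 ^ 500 ≤ p := by
      have hcast : ((2 ^ 500 : ℕ) : ℝ) < (p : ℝ) := by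
        push_cast
        exact hple
      exact_mod_cast hcast.le
    obtain ⟨A₀, hgA, hsubA, hcard⟩ := exists499 p q hq1 hqp copN hpbig L hL
    have hsub1 : A₀.image (· + 1) ⊆ Finset.Icc 1 (L : ℤ) := by
      intro x hx
      simp only [Finset.mem_image] at hx
      obtain ⟨y, hy, rfl⟩ := hx
      have hy2 := Finset.mem_Icc.mp (hsubA hy)
      rw [Finset.mem_Icc]
      omega
    refine ⟨A₀.image (· + 1), hsub1, ?_, key _ hsub1 (good_image_add hgA 1)⟩
    rw [Finset.card_image_of_injective _ (add_left_injective 1)]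
    exact rpow_bound 499 1000 0.499 (by norm_num) (by norm_num) (by norm_num) hcard
end

section
/- Let a, b, c be positive integers with a ≤ b ≤ c and gcd(b,c) = 1. Suppose that for a real number α₂ ∈ (0, 1/2) there exist integers i₁, j₁, k₁, not all zero, with |i₁|, |j₁|, |k₁| ≤ b^{α₂} such that i₁·a + j₁·b + k₁·c = 0. If integers i₂, j₂, k₂ satisfy i₂·a + j₂·b + k₂·c = 0 and (i₂, j₂, k₂) is not of the form (t·i₁, t·j₁, t·k₁) for any rational number t, then max(|i₂|, |j₂|, |k₂|) ≥ (1/2)·b^{1−α₂}. -/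
/-- Let `a ≤ b ≤ c` be positive integers with `gcd(b,c) = 1`, and `α₂ ∈ (0,1/2)`.
Suppose `i₁, j₁, k₁`, not all zero, satisfy `|i₁|,|j₁|,|k₁| ≤ b^{α₂}` and
`i₁·a + j₁·b + k₁·c = 0`. If `i₂, j₂, k₂` satisfy `i₂·a + j₂·b + k₂·c = 0` and are not a
rational multiple of `(i₁,j₁,k₁)`, then `max(|i₂|,|j₂|,|k₂|) ≥ (1/2)·b^{1−α₂}`. -/
theorem statement14 (a b c : ℕ) (ha : 0 < a) (hab : a ≤ b) (hbc : b ≤ c)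
    (hco : Nat.Coprime b c) (α₂ : ℝ) (hα₂ : 0 < α₂) (hα₂' : α₂ < 1 / 2)
    (i₁ j₁ k₁ : ℤ) (hnz : ¬(i₁ = 0 ∧ j₁ = 0 ∧ k₁ = 0))
    (hi : ((|i₁| : ℤ) : ℝ) ≤ (b : ℝ) ^ α₂) (hj : ((|j₁| : ℤ) : ℝ) ≤ (b : ℝ) ^ α₂)
    (hk : ((|k₁| : ℤ) : ℝ) ≤ (b : ℝ) ^ α₂)
    (heq1 : i₁ * (a : ℤ) + j₁ * (b : ℤ) + k₁ * (c : ℤ) = 0)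
    (i₂ j₂ k₂ : ℤ)
    (heq2 : i₂ * (a : ℤ) + j₂ * (b : ℤ) + k₂ * (c : ℤ) = 0)
    (hnm : ¬ ∃ t : ℚ, (i₂ : ℚ) = t * (i₁ : ℚ) ∧ (j₂ : ℚ) = t * (j₁ : ℚ) ∧
      (k₂ : ℚ) = t * (k₁ : ℚ)) :
    (1 / 2 : ℝ) * (b : ℝ) ^ ((1 : ℝ) - α₂) ≤ ((max |i₂| (max |j₂| |k₂|) : ℤ) : ℝ) := by
  have hb1 : 1 ≤ b := le_trans ha hab
  have hc0 : (0:ℤ) < (c:ℤ) := by exact_mod_cast lt_of_lt_of_le (lt_of_lt_of_le ha hab) hbc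
  set ta : ℤ := j₁ * k₂ - k₁ * j₂ with hta_def
  set tb : ℤ := k₁ * i₂ - i₁ * k₂ with htb_def
  set tc : ℤ := i₁ * j₂ - j₁ * i₂ with htc_def
  have h1 : (a:ℤ) * tc = (c:ℤ) * ta := by
    simp only [hta_def, htc_def]; linear_combination j₂ * heq1 - j₁ * heq2
  have h2 : (b:ℤ) * tc = (c:ℤ) * tb := by
    simp only [htb_def, htc_def]; linear_combination (-i₂) * heq1 + i₁ * heq2
  have htc : tc ≠ 0 := by
    intro h
    have hta : ta = 0 := by
      have := h1; rw [h, mul_zero] at this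
      exact (mul_eq_zero.mp this.symm).resolve_left hc0.ne'
    have htb : tb = 0 := by
      have := h2; rw [h, mul_zero] at this
      exact (mul_eq_zero.mp this.symm).resolve_left hc0.ne'
    apply hnm
    have hta' : j₁ * k₂ = k₁ * j₂ := by linarith [hta_def ▸ hta]
    have htb' : k₁ * i₂ = i₁ * k₂ := by
      have := htb_def ▸ htb; linarith
    have htc' : i₁ * j₂ = j₁ * i₂ := by
      have := htc_def ▸ h; linarith
    have qta : (j₁:ℚ) * k₂ = (k₁:ℚ) * j₂ := by exact_mod_cast congrArg (Int.cast : ℤ → ℚ) hta'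
    have qtb : (k₁:ℚ) * i₂ = (i₁:ℚ) * k₂ := by exact_mod_cast congrArg (Int.cast : ℤ → ℚ) htb'
    have qtc : (i₁:ℚ) * j₂ = (j₁:ℚ) * i₂ := by exact_mod_cast congrArg (Int.cast : ℤ → ℚ) htc'
    rcases not_and_or.mp hnz with h1' | h'
    · have hne : (i₁:ℚ) ≠ 0 := Int.cast_ne_zero.mpr h1'
      refine ⟨(i₂ : ℚ) / (i₁ : ℚ), ?_, ?_, ?_⟩
      · field_simp
      · field_simp; linear_combination qtc
      · field_simp; linear_combination -qtb
    · rcases not_and_or.mp h' with h1' | h1'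
      · have hne : (j₁:ℚ) ≠ 0 := Int.cast_ne_zero.mpr h1'
        refine ⟨(j₂ : ℚ) / (j₁ : ℚ), ?_, ?_, ?_⟩
        · field_simp; linear_combination -qtc
        · field_simp
        · field_simp; linear_combination qta
      · have hne : (k₁:ℚ) ≠ 0 := Int.cast_ne_zero.mpr h1'
        refine ⟨(k₂ : ℚ) / (k₁ : ℚ), ?_, ?_, ?_⟩
        · field_simp; linear_combination qtb
        · field_simp; linear_combination -qta
        · field_simp
  -- c divides tc
  have hcop : IsCoprime (c:ℤ) (b:ℤ) := by
    rw [Int.isCoprime_iff_gcd_eq_one]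
    simpa [Int.gcd, Nat.coprime_comm] using hco.symm
  have hdvd : (c:ℤ) ∣ tc := hcop.dvd_of_dvd_mul_left ⟨tb, h2⟩
  have hble : (b:ℤ) ≤ |tc| := by
    calc (b:ℤ) ≤ (c:ℤ) := by exact_mod_cast hbc
    _ ≤ |tc| := Int.le_of_dvd (abs_pos.mpr htc) ((dvd_abs _ _).mpr hdvd)
  -- real estimates
  set M : ℤ := max |i₂| (max |j₂| |k₂|) with hM
  have hi₂M : (|i₂|:ℝ) ≤ (M:ℝ) := by exact_mod_cast le_max_left _ _
  have hj₂M : (|j₂|:ℝ) ≤ (M:ℝ) := by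
    exact_mod_cast le_trans (le_max_left |j₂| |k₂|) (le_max_right _ _)
  have hpow : (0:ℝ) < (b:ℝ) ^ α₂ :=
    Real.rpow_pos_of_pos (by exact_mod_cast lt_of_lt_of_le one_pos hb1) _
  have habs : (|tc|:ℝ) ≤ (b:ℝ) ^ α₂ * ((M:ℝ) + (M:ℝ)) := by
    have h1 : (|tc|:ℝ) ≤ (|i₁|:ℝ) * (|j₂|:ℝ) + (|j₁|:ℝ) * (|i₂|:ℝ) := by
      have h0 : |tc| ≤ |i₁| * |j₂| + |j₁| * |i₂| := by
        calc |tc| = |i₁ * j₂ - j₁ * i₂| := by rw [htc_def]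
          _ ≤ |i₁ * j₂| + |j₁ * i₂| := abs_sub _ _
          _ = |i₁| * |j₂| + |j₁| * |i₂| := by rw [abs_mul, abs_mul]
      exact_mod_cast h0
    have hi₁ : (|i₁|:ℝ) ≤ (b:ℝ) ^ α₂ := by exact_mod_cast hi
    have hj₁ : (|j₁|:ℝ) ≤ (b:ℝ) ^ α₂ := by exact_mod_cast hj
    have hnn : (0:ℝ) ≤ (|i₂|:ℝ) := by positivity
    have hnn2 : (0:ℝ) ≤ (|j₂|:ℝ) := by positivity
    calc (|tc|:ℝ) ≤ (|i₁|:ℝ) * (|j₂|:ℝ) + (|j₁|:ℝ) * (|i₂|:ℝ) := h1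
      _ ≤ (b:ℝ)^α₂ * (|j₂|:ℝ) + (b:ℝ)^α₂ * (|i₂|:ℝ) := by
          gcongr
      _ ≤ (b:ℝ)^α₂ * ((M:ℝ) + (M:ℝ)) := by
          rw [mul_add]; gcongr
  have hbR : (b:ℝ) ≤ (b:ℝ) ^ α₂ * (2 * (M:ℝ)) := by
    have : (b:ℝ) ≤ (|tc|:ℝ) := by exact_mod_cast hble
    nlinarith [habs]
  have hbpos : (0:ℝ) < (b:ℝ) := by exact_mod_cast lt_of_lt_of_le one_pos hb1
  have hrw : (b:ℝ) ^ ((1:ℝ) - α₂) = (b:ℝ) / (b:ℝ) ^ α₂ := by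
    rw [Real.rpow_sub hbpos, Real.rpow_one]
  rw [hrw]
  calc (1/2 : ℝ) * ((b:ℝ) / (b:ℝ)^α₂) ≤ (1/2:ℝ) * (2 * (M:ℝ)) := by
        have : (b:ℝ) / (b:ℝ)^α₂ ≤ 2 * (M:ℝ) := by
          rw [div_le_iff₀ hpow]; linarith [hbR]
        linarith
    _ = (M:ℝ) := by ring
end

section
/- Let d ≥ 2 be an integer and let A be a finite set of integers containing no non-trivial solutions to the equation x₁ + x₂ + d·x₃ + d·x₄ = 2y₁ + 2d·y₂. Consider the set A ∔ dA = {a₁ + d·a₂ : a₁, a₂ ∈ A, a₁ ≠ a₂}. Then: (i) the values a₁ + d·a₂ over ordered pairs (a₁,a₂) ∈ A² with a₁ ≠ a₂ are pairwise distinct, so |A ∔ dA| = |A|² − |A|; and (ii) there are no three elements u, v, w ∈ A ∔ dA with u < v < w and u + w = 2v. -/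
set_option maxHeartbeats 4000000 in
lemma aux17 (d a₁ c₁ a₂ c₂ b₁ b₂ : ℤ) (hd : 2 ≤ d)
    (ha : a₁ ≠ a₂) (hc : c₁ ≠ c₂) (hb : b₁ ≠ b₂)
    (H : ∀ α : ℤ, (if a₁ = α then (1:ℤ) else 0) + ((if c₁ = α then (1:ℤ) else 0)
      + ((if a₂ = α then d else 0) + ((if c₂ = α then d else 0)
      + ((if b₁ = α then -2 else 0) + (if b₂ = α then -(2*d) else 0))))) = 0) :
    a₁ = c₁ ∧ a₂ = c₂ := by
  have h1 := H b₁
  have h2 := H b₂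
  split_ifs at h1 h2 <;> omega

/-- Let `d ≥ 2` and let `A` be a finite set of integers containing no non-trivial
solutions (every solution with entries in `A` is trivial, coefficients `(1,1,d,d,−2,−2d)`) to
`x₁ + x₂ + d·x₃ + d·x₄ = 2y₁ + 2d·y₂`. Then: (i) the values `a₁ + d·a₂` over ordered pairs with
`a₁ ≠ a₂` are pairwise distinct, so `|A ∔ dA| = |A|² − |A|`; and (ii) `A ∔ dA` contains no
three elements `u < v < w` with `u + w = 2v`. -/
theorem statement17 (d : ℕ) (hd : 2 ≤ d) (A : Finset ℤ)
    (htriv : ∀ v : Fin 6 → ℤ, (∀ i, v i ∈ A) →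
      (∑ i, ![(1 : ℤ), 1, (d : ℤ), (d : ℤ), -2, -2 * (d : ℤ)] i * v i) = 0 →
      ∀ α : ℤ, (∑ i ∈ Finset.univ.filter (fun i => v i = α),
        ![(1 : ℤ), 1, (d : ℤ), (d : ℤ), -2, -2 * (d : ℤ)] i) = 0) :
    (∀ a₁ a₂ b₁ b₂ : ℤ, a₁ ∈ A → a₂ ∈ A → b₁ ∈ A → b₂ ∈ A → a₁ ≠ a₂ → b₁ ≠ b₂ →
      a₁ + (d : ℤ) * a₂ = b₁ + (d : ℤ) * b₂ → a₁ = b₁ ∧ a₂ = b₂) ∧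
    (((A ×ˢ A).filter (fun p => p.1 ≠ p.2)).image (fun p => p.1 + (d : ℤ) * p.2)).card
      = A.card ^ 2 - A.card ∧
    ∀ u v w : ℤ,
      u ∈ ((A ×ˢ A).filter (fun p => p.1 ≠ p.2)).image (fun p => p.1 + (d : ℤ) * p.2) →
      v ∈ ((A ×ˢ A).filter (fun p => p.1 ≠ p.2)).image (fun p => p.1 + (d : ℤ) * p.2) →
      w ∈ ((A ×ˢ A).filter (fun p => p.1 ≠ p.2)).image (fun p => p.1 + (d : ℤ) * p.2) →
      u < v → v < w → u + w ≠ 2 * v := by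
  have key : ∀ a₁ a₂ c₁ c₂ b₁ b₂ : ℤ, a₁ ∈ A → a₂ ∈ A → c₁ ∈ A → c₂ ∈ A →
      b₁ ∈ A → b₂ ∈ A → a₁ ≠ a₂ → c₁ ≠ c₂ → b₁ ≠ b₂ →
      a₁ + (d:ℤ)*a₂ + (c₁ + (d:ℤ)*c₂) = 2*(b₁ + (d:ℤ)*b₂) → a₁ = c₁ ∧ a₂ = c₂ := by
    intro a₁ a₂ c₁ c₂ b₁ b₂ ha₁ ha₂ hc₁ hc₂ hb₁ hb₂ ha hc hb heq
    refine aux17 (d:ℤ) a₁ c₁ a₂ c₂ b₁ b₂ (by exact_mod_cast hd) ha hc hb ?_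
    intro α
    have h := htriv ![a₁, c₁, a₂, c₂, b₁, b₂]
      (by intro i; fin_cases i <;> assumption)
      (by simp [Fin.sum_univ_succ]; ring_nf; ring_nf at heq; linarith) α
    simp [Finset.sum_filter, Fin.sum_univ_succ] at h
    split_ifs at h ⊢ <;> omega
  have inj : ∀ a₁ a₂ b₁ b₂ : ℤ, a₁ ∈ A → a₂ ∈ A → b₁ ∈ A → b₂ ∈ A → a₁ ≠ a₂ → b₁ ≠ b₂ →
      a₁ + (d : ℤ) * a₂ = b₁ + (d : ℤ) * b₂ → a₁ = b₁ ∧ a₂ = b₂ := by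
    intro a₁ a₂ b₁ b₂ h1 h2 h3 h4 h5 h6 h7
    exact key a₁ a₂ b₁ b₂ b₁ b₂ h1 h2 h3 h4 h3 h4 h5 h6 h6 (by linarith)
  refine ⟨inj, ?_, ?_⟩
  · rw [Finset.card_image_of_injOn]
    · have hdiag : (A ×ˢ A).filter (fun p => p.1 = p.2) = A.image (fun a => (a, a)) := by
        ext ⟨x, y⟩
        simp only [Finset.mem_filter, Finset.mem_product, Finset.mem_image, Prod.mk.injEq]
        constructor
        · rintro ⟨⟨hx, hy⟩, h⟩; exact ⟨x, hx, rfl, h⟩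
        · rintro ⟨a, ha, rfl, rfl⟩; exact ⟨⟨ha, ha⟩, rfl⟩
      have h2 := Finset.card_filter_add_card_filter_not
        (s := A ×ˢ A) (p := fun p => p.1 = p.2)
      rw [hdiag, Finset.card_image_of_injective _ (fun a b h => (Prod.mk.injEq _ _ _ _ ▸ h).1),
        Finset.card_product] at h2
      simp only [ne_eq]
      rw [sq]
      omega
    · intro p hp q hq h
      simp only [Finset.coe_filter, Set.mem_setOf_eq, Finset.mem_product] at hp hq
      obtain ⟨⟨hp1, hp2⟩, hp3⟩ := hp
      obtain ⟨⟨hq1, hq2⟩, hq3⟩ := hq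
      obtain ⟨e1, e2⟩ := inj p.1 p.2 q.1 q.2 hp1 hp2 hq1 hq2 hp3 hq3 h
      exact Prod.ext e1 e2
  · intro u v w hu hv hw huv hvw heq
    simp only [Finset.mem_image, Finset.mem_filter, Finset.mem_product] at hu hv hw
    obtain ⟨⟨a₁, a₂⟩, ⟨⟨ha1, ha2⟩, ha3⟩, hae⟩ := hu
    obtain ⟨⟨b₁, b₂⟩, ⟨⟨hb1, hb2⟩, hb3⟩, hbe⟩ := hv
    obtain ⟨⟨c₁, c₂⟩, ⟨⟨hc1, hc2⟩, hc3⟩, hce⟩ := hw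
    obtain ⟨e1, e2⟩ := key a₁ a₂ c₁ c₂ b₁ b₂ ha1 ha2 hc1 hc2 hb1 hb2 ha3 hc3 hb3
      (by simp only at hae hbe hce; linarith)
    subst e1 e2
    simp only at hae hce
    omega
end

section
/- There exist an absolute constant C > 0 and an integer d₀ such that for every integer d ≥ d₀ there is κ > 0 with the following property: for every positive integer N there exists a set A ⊆ [N] with |A| ≥ κ · N^{1/2 − C/(log d)^{1/2}} containing no non-trivial solutions to the equation x₁ + x₂ + d·x₃ + d·x₄ = 2y₁ + 2d·y₂. -/
open Finset Real

/-- If `∑ s j * M^j = 0` with all `|s j| < M`, then all `s j = 0`. -/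
lemma st18_digit_zero (M : ℤ) : ∀ {k : ℕ} (s : Fin k → ℤ),
    (∀ j, |s j| < M) → (∑ j, s j * M ^ (j : ℕ)) = 0 → ∀ j, s j = 0 := by
  intro k
  induction k with
  | zero => intro s _ _ j; exact j.elim0
  | succ k ih =>
    intro s hs h j
    have hM : 0 < M := (abs_nonneg _).trans_lt (hs 0)
    rw [Fin.sum_univ_succ] at h
    have h' : s 0 + (∑ i : Fin k, s i.succ * M ^ (i : ℕ)) * M = 0 := by
      rw [← h, Finset.sum_mul]
      have : ∀ i : Fin k, s i.succ * M ^ ((i.succ : Fin (k+1)) : ℕ)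
          = s i.succ * M ^ (i : ℕ) * M := by
        intro i; rw [Fin.val_succ, pow_succ]; ring
      rw [Finset.sum_congr rfl (fun i _ => this i)]
      simp
    set T := ∑ i : Fin k, s i.succ * M ^ (i : ℕ) with hT
    have hT0 : T = 0 := by
      by_contra hne
      have h1 : (1 : ℤ) ≤ |T| := Int.one_le_abs hne
      have : |s 0| = |T| * M := by
        have : s 0 = -(T * M) := by linarith
        rw [this, abs_neg, abs_mul, abs_of_pos hM]
      nlinarith [hs 0]
    have hs0 : s 0 = 0 := by rw [hT0] at h'; linarith
    refine Fin.cases hs0 ?_ j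
    intro i
    exact ih (fun i => s i.succ) (fun i => hs i.succ) (by rw [← hT, hT0]) i

set_option maxHeartbeats 2000000 in
/-- There are an absolute constant `C > 0` and an integer `d₀` such that for every
`d ≥ d₀` there is `κ > 0` with: for every positive integer `N` there is `A ⊆ [N]` with
`|A| ≥ κ·N^{1/2 − C/(log d)^{1/2}}` containing no non-trivial solutions (every solution with
entries in `A` is trivial, coefficients `(1,1,d,d,−2,−2d)`) to
`x₁ + x₂ + d·x₃ + d·x₄ = 2y₁ + 2d·y₂`. -/
theorem statement18 :
    ∃ C : ℝ, 0 < C ∧ ∃ d₀ : ℕ, ∀ d : ℕ, d₀ ≤ d →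
      ∃ κ : ℝ, 0 < κ ∧ ∀ N : ℕ, 0 < N → ∃ A : Finset ℤ,
        A ⊆ Finset.Icc 1 (N : ℤ) ∧
        κ * (N : ℝ) ^ ((1 : ℝ) / 2 - C / (Real.log d) ^ ((1 : ℝ) / 2)) ≤ A.card ∧
        ∀ v : Fin 6 → ℤ, (∀ i, v i ∈ A) →
          (∑ i, ![(1 : ℤ), 1, (d : ℤ), (d : ℤ), -2, -2 * (d : ℤ)] i * v i) = 0 →
          ∀ α : ℤ, (∑ i ∈ Finset.univ.filter (fun i => v i = α),
            ![(1 : ℤ), 1, (d : ℤ), (d : ℤ), -2, -2 * (d : ℤ)] i) = 0 := by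
  refine ⟨3, by norm_num, 10 ^ 16, fun d hd => ?_⟩
  -- basic numbers
  set m : ℕ := d / 2 with hm
  set M : ℕ := 4 * d * m + 1 with hM
  set θ : ℝ := (1 : ℝ) / 2 - 3 / (Real.log d) ^ ((1 : ℝ) / 2) with hθ
  have hd2 : 2 ≤ d := le_trans (by norm_num) hd
  have hm1 : 1 ≤ m := Nat.le_div_iff_mul_le (by norm_num) |>.2 (by omega)
  have hM2 : 2 ≤ M := by
    have : 1 ≤ 4 * d * m := Nat.one_le_iff_ne_zero.2 (by positivity)
    omega
  -- log d is at least 36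
  have hlogd : (36 : ℝ) ≤ Real.log d := by
    have h1 : Real.exp 36 ≤ (10 : ℝ) ^ 16 := by
      have : Real.exp 36 = Real.exp 1 ^ (36 : ℕ) := by
        rw [← Real.exp_nat_mul]; norm_num
      rw [this]
      calc Real.exp 1 ^ (36 : ℕ) ≤ (2.7182818286 : ℝ) ^ (36 : ℕ) := by
            exact pow_le_pow_left₀ (Real.exp_pos 1).le Real.exp_one_lt_d9.le 36
        _ ≤ (10 : ℝ) ^ 16 := by norm_num
    have h2 : ((10 : ℝ) ^ 16) ≤ (d : ℝ) := by
      have := hd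
      exact_mod_cast (by exact_mod_cast this : ((10:ℕ)^16 : ℝ) ≤ (d : ℝ))
    rw [← Real.log_exp 36]
    exact Real.log_le_log (Real.exp_pos _) (h1.trans h2)
  have hLpos : (0 : ℝ) < Real.log d := by linarith
  set L : ℝ := Real.log d with hL
  set x : ℝ := Real.sqrt L with hx
  have hx6 : 6 ≤ x := by
    rw [hx]
    have : (6 : ℝ) = Real.sqrt 36 := by
      rw [show (36 : ℝ) = 6 ^ 2 by norm_num, Real.sqrt_sq]; norm_num
    rw [this]; exact Real.sqrt_le_sqrt hlogd
  have hx0 : 0 < x := by linarith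
  have hxsq : x ^ 2 = L := Real.sq_sqrt hLpos.le
  have hrpow_sqrt : (Real.log d) ^ ((1 : ℝ) / 2) = x := by
    rw [hx, hL, Real.sqrt_eq_rpow]
  have hθx : θ = 1 / 2 - 3 / x := by rw [hθ, hrpow_sqrt]
  have hθ0 : 0 ≤ θ := by
    rw [hθx]
    have : 3 / x ≤ 3 / 6 := by
      apply div_le_div_of_nonneg_left (by norm_num) (by norm_num) hx6
    linarith
  have hθ1 : θ ≤ 1 := by
    rw [hθx]
    have : 0 ≤ 3 / x := by positivity
    linarith
  -- choose B : Behrend set in range m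
  obtain ⟨B, hBsub, hBcard, hB3⟩ := rothNumberNat_spec m
  -- key analytic bound : M^θ ≤ B.card
  have hmd : m ≤ d := Nat.div_le_self d 2
  have hexp2 : (4 : ℝ) ≤ Real.exp 2 := by
    have h27 : (2.7 : ℝ) ≤ Real.exp 1 := by
      have := Real.exp_one_gt_d9
      norm_num at this ⊢
      linarith
    have : Real.exp 2 = Real.exp 1 * Real.exp 1 := by
      rw [← Real.exp_add]; norm_num
    nlinarith
  have hkey : (M : ℝ) ^ θ ≤ (B.card : ℝ) := by
    have hmpos : (0 : ℝ) < (m : ℝ) := by exact_mod_cast hm1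
    have hMpos : (0 : ℝ) < (M : ℝ) := by positivity
    have hdpos : (0 : ℝ) < (d : ℝ) := by
      have : (0:ℕ) < d := by omega
      exact_mod_cast this
    -- log m bounds
    have hlogm_ub : Real.log m ≤ L := by
      rw [hL]
      exact Real.log_le_log hmpos (by exact_mod_cast hmd)
    have hm_lb : (d : ℝ) / 4 ≤ (m : ℝ) := by
      have h1 : d ≤ 2 * m + 1 := by omega
      have h1' : (d : ℝ) ≤ 2 * m + 1 := by exact_mod_cast h1
      have hd4 : (4 : ℝ) ≤ (d : ℝ) := by
        have : (4:ℕ) ≤ d := by omega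
        exact_mod_cast this
      nlinarith
    have hlogm_lb : L - 2 ≤ Real.log m := by
      have h1 : Real.log ((d : ℝ) / 4) ≤ Real.log m := Real.log_le_log (by positivity) hm_lb
      have h2 : Real.log ((d : ℝ) / 4) = L - Real.log 4 := by
        rw [hL, Real.log_div (by positivity) (by norm_num)]
      have h3 : Real.log 4 ≤ 2 := by
        rw [← Real.log_exp 2]
        exact Real.log_le_log (by norm_num) hexp2
      linarith
    -- log M bound
    have hM_ub : (M : ℝ) ≤ Real.exp 2 * (d : ℝ) ^ 2 := by
      have h1 : (M : ℝ) ≤ 3 * (d : ℝ) ^ 2 := by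
        have h2 : M ≤ 3 * d ^ 2 := by
          have : 4 * d * m + 1 ≤ 4 * d * (d/2) + 1 := by rfl
          have h4 : 2 * m ≤ d := by omega
          calc M = 4 * d * m + 1 := rfl
            _ = 2 * d * (2 * m) + 1 := by ring
            _ ≤ 2 * d * d + 1 := by
                have := Nat.mul_le_mul_left (2 * d) h4
                omega
            _ ≤ 3 * d ^ 2 := by nlinarith
        exact_mod_cast h2
      nlinarith
    have hlogM_ub : Real.log M ≤ 2 * L + 2 := by
      have h1 : Real.log M ≤ Real.log (Real.exp 2 * (d:ℝ)^2) := Real.log_le_log hMpos hM_ub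
      have h2 : Real.log (Real.exp 2 * (d:ℝ)^2) = 2 + 2 * L := by
        rw [Real.log_mul (by positivity) (by positivity), Real.log_exp,
          Real.log_pow, hL]
        push_cast
        ring
      linarith
    -- numeric inequality
    have hnum : θ * (2 * L + 2) ≤ (L - 2) - 4 * x := by
      have e : (1/2 - 3/x) * (2 * x ^ 2 + 2) = x ^ 2 + 1 - 6 * x - 6 / x := by
        field_simp; ring
      have h6x : 0 < 6 / x := by positivity
      rw [hθx, ← hxsq, e]
      linarith
    have hsq : Real.sqrt (Real.log m) ≤ x := by
      rw [hx]; exact Real.sqrt_le_sqrt hlogm_ub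
    have hlogm_nonneg : 0 ≤ Real.log m := by linarith
    -- chain
    have hchain : (M : ℝ) ^ θ ≤ (m : ℝ) * Real.exp (-4 * Real.sqrt (Real.log m)) := by
      rw [Real.rpow_def_of_pos hMpos]
      have h1 : Real.log M * θ ≤ (L - 2) - 4 * x := by
        have hlogM_nonneg : 0 ≤ Real.log M := Real.log_nonneg (by exact_mod_cast hM2.trans' (by norm_num) : (1:ℝ) ≤ M)
        calc Real.log M * θ = θ * Real.log M := by ring
          _ ≤ θ * (2 * L + 2) := by
              exact mul_le_mul_of_nonneg_left hlogM_ub hθ0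
          _ ≤ (L - 2) - 4 * x := hnum
      have h2 : (L - 2) - 4 * x ≤ Real.log m - 4 * Real.sqrt (Real.log m) := by
        have : Real.sqrt (Real.log m) ≤ x := hsq
        linarith
      have h3 : (m : ℝ) * Real.exp (-4 * Real.sqrt (Real.log m))
          = Real.exp (Real.log m - 4 * Real.sqrt (Real.log m)) := by
        rw [show Real.log ↑m - 4 * Real.sqrt (Real.log ↑m)
            = Real.log ↑m + (-4 * Real.sqrt (Real.log ↑m)) by ring,
          Real.exp_add, Real.exp_log hmpos]
      rw [h3]
      exact Real.exp_le_exp.2 (by linarith)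
    calc (M : ℝ) ^ θ ≤ (m : ℝ) * Real.exp (-4 * Real.sqrt (Real.log m)) := hchain
      _ ≤ (rothNumberNat m : ℝ) := Behrend.roth_lower_bound
      _ = (B.card : ℝ) := by rw [hBcard]
  -- κ
  refine ⟨1 / M, by positivity, fun N hN => ?_⟩
  set k : ℕ := Nat.log M N with hk
  -- the construction
  set Φ : (Fin k → ℕ) → ℤ := fun f => 1 + ∑ j, (f j : ℤ) * (M : ℤ) ^ (j : ℕ) with hΦ
  set A : Finset ℤ := (Fintype.piFinset (fun _ : Fin k => B)).image Φ with hA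
  have hmem : ∀ f ∈ Fintype.piFinset (fun _ : Fin k => B), ∀ j, f j < m := by
    intro f hf j
    have := Fintype.mem_piFinset.1 hf j
    exact Finset.mem_range.1 (hBsub this)
  have hinj : Set.InjOn Φ (Fintype.piFinset (fun _ : Fin k => B)) := by
    intro f hf g hg hfg
    have hz : ∀ j, ((f j : ℤ) - (g j : ℤ)) = 0 := by
      apply st18_digit_zero (M : ℤ)
      · intro j
        have h1 := hmem f hf j
        have h2 := hmem g hg j
        have hmM : (m : ℤ) ≤ M := by
          have : m ≤ M := by
            calc m ≤ 4 * d * m := by nlinarith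
              _ ≤ M := by omega
          exact_mod_cast this
        rw [abs_sub_lt_iff]
        have e1 : (f j : ℤ) < m := by exact_mod_cast h1
        have e2 : (g j : ℤ) < m := by exact_mod_cast h2
        have e3 : (0 : ℤ) ≤ (f j : ℤ) := Int.ofNat_nonneg _
        have e4 : (0 : ℤ) ≤ (g j : ℤ) := Int.ofNat_nonneg _
        constructor <;> linarith
      · have : (∑ j, ((f j : ℤ) - g j) * (M : ℤ) ^ (j : ℕ))
            = (∑ j, (f j : ℤ) * (M : ℤ) ^ (j : ℕ)) - ∑ j, (g j : ℤ) * (M : ℤ) ^ (j : ℕ) := by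
          rw [← Finset.sum_sub_distrib]
          exact Finset.sum_congr rfl fun j _ => by ring
        rw [this]
        have : (∑ j, (f j : ℤ) * (M : ℤ) ^ (j : ℕ)) = ∑ j, (g j : ℤ) * (M : ℤ) ^ (j : ℕ) := by
          have := hfg
          simp only [hΦ] at this
          linarith
        omega
    funext j
    have := hz j
    omega
  have hcardA : A.card = B.card ^ k := by
    rw [hA, Finset.card_image_of_injOn hinj, Fintype.card_piFinset]
    simp
  refine ⟨A, ?_, ?_, ?_⟩
  · -- A ⊆ Icc 1 N
    intro a ha
    obtain ⟨f, hf, rfl⟩ := Finset.mem_image.1 ha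
    have hnn : ∀ j : Fin k, (0:ℤ) ≤ (f j : ℤ) * (M:ℤ) ^ (j:ℕ) := by
      intro j; positivity
    have hub : ∀ j : Fin k, (f j : ℤ) * (M:ℤ) ^ (j:ℕ) ≤ ((M:ℤ) - 1) * (M:ℤ) ^ (j:ℕ) := by
      intro j
      have h1 : f j < m := hmem f hf j
      have h2 : m ≤ M := by nlinarith [hm1, hd2]
      have h3 : (f j : ℤ) ≤ (M:ℤ) - 1 := by
        have : f j < M := lt_of_lt_of_le h1 h2
        have : (f j : ℤ) < (M:ℤ) := by exact_mod_cast this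
        omega
      exact mul_le_mul_of_nonneg_right h3 (by positivity)
    have hgeom : (∑ j : Fin k, ((M:ℤ) - 1) * (M:ℤ) ^ (j:ℕ)) = (M:ℤ) ^ k - 1 := by
      rw [Fin.sum_univ_eq_sum_range (fun j => ((M:ℤ) - 1) * (M:ℤ) ^ j) k,
        ← Finset.mul_sum, mul_comm]
      exact geom_sum_mul _ _
    have hMkN : (M:ℤ) ^ k ≤ (N:ℤ) := by
      have := Nat.pow_log_le_self M hN.ne'
      have h2 : M ^ k ≤ N := this
      exact_mod_cast h2
    rw [Finset.mem_Icc]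
    constructor
    · simp only [hΦ]
      have : (0:ℤ) ≤ ∑ j, (f j : ℤ) * (M:ℤ) ^ (j:ℕ) := Finset.sum_nonneg (fun j _ => hnn j)
      linarith
    · simp only [hΦ]
      have h1 : (∑ j, (f j : ℤ) * (M:ℤ) ^ (j:ℕ)) ≤ ∑ j : Fin k, ((M:ℤ) - 1) * (M:ℤ) ^ (j:ℕ) :=
        Finset.sum_le_sum (fun j _ => hub j)
      rw [hgeom] at h1
      linarith
  · -- cardinality bound
    have hMpos : (0:ℝ) < (M:ℝ) := by
      have : (0:ℕ) < M := by omega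
      exact_mod_cast this
    have hM1 : (1:ℝ) ≤ (M:ℝ) := by
      have : (1:ℕ) ≤ M := by omega
      exact_mod_cast this
    have hNlt : (N:ℝ) ≤ ((M:ℝ) ^ (k + 1 : ℕ)) := by
      have h1 : N ≤ M ^ (k+1) := (Nat.lt_pow_succ_log_self (by omega) N).le
      calc (N:ℝ) ≤ ((M ^ (k+1) : ℕ) : ℝ) := Nat.cast_le.2 h1
        _ = (M:ℝ) ^ (k+1) := by rw [Nat.cast_pow]
    rw [hcardA]
    have step1 : (N:ℝ) ^ θ ≤ ((M:ℝ) ^ (k+1:ℕ)) ^ θ :=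
      Real.rpow_le_rpow (Nat.cast_nonneg N) hNlt hθ0
    have step2 : ((M:ℝ) ^ (k+1:ℕ)) ^ θ = (M:ℝ) ^ (((k:ℝ)+1) * θ) := by
      rw [← Real.rpow_natCast (M:ℝ) (k+1), ← Real.rpow_mul hMpos.le]
      push_cast
      ring_nf
    have step3 : (1/(M:ℝ)) ≤ (M:ℝ) ^ (-θ) := by
      rw [show (1/(M:ℝ)) = (M:ℝ) ^ (-1 : ℝ) by
        rw [Real.rpow_neg_one]; rw [inv_eq_one_div]]
      exact Real.rpow_le_rpow_of_exponent_le hM1 (by linarith)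
    have step4 : (M:ℝ) ^ (-θ) * (M:ℝ) ^ (((k:ℝ)+1) * θ) = ((M:ℝ) ^ θ) ^ (k:ℕ) := by
      rw [← Real.rpow_add hMpos, ← Real.rpow_natCast ((M:ℝ) ^ θ) k,
        ← Real.rpow_mul hMpos.le]
      congr 1
      ring
    have step5 : ((M:ℝ) ^ θ) ^ (k:ℕ) ≤ ((B.card : ℝ)) ^ (k:ℕ) :=
      pow_le_pow_left₀ (Real.rpow_nonneg hMpos.le θ) hkey k
    calc (1/(M:ℝ)) * (N:ℝ) ^ θ
        ≤ (1/(M:ℝ)) * ((M:ℝ) ^ (k+1:ℕ)) ^ θ := by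
          apply mul_le_mul_of_nonneg_left step1 (by positivity)
      _ = (1/(M:ℝ)) * (M:ℝ) ^ (((k:ℝ)+1) * θ) := by rw [step2]
      _ ≤ (M:ℝ) ^ (-θ) * (M:ℝ) ^ (((k:ℝ)+1) * θ) := by
          apply mul_le_mul_of_nonneg_right step3 (by positivity)
      _ = ((M:ℝ) ^ θ) ^ (k:ℕ) := step4
      _ ≤ ((B.card : ℝ)) ^ (k:ℕ) := step5
      _ = ((B.card ^ k : ℕ) : ℝ) := by push_cast; ring
  · -- no nontrivial solutions
    intro v hv heq α
    have hdig : ∀ i : Fin 6, ∃ f ∈ Fintype.piFinset (fun _ : Fin k => B), Φ f = v i := by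
      intro i
      obtain ⟨f, hf, hfe⟩ := Finset.mem_image.1 (hv i)
      exact ⟨f, hf, hfe⟩
    choose b hbmem hbeq using hdig
    have hblt : ∀ i j, b i j < m := fun i j => hmem (b i) (hbmem i) j
    have hbB : ∀ i j, b i j ∈ B := fun i j => Fintype.mem_piFinset.1 (hbmem i) j
    -- expand the equation
    rw [Fin.sum_univ_six] at heq
    simp only [show (![(1 : ℤ), 1, (d : ℤ), (d : ℤ), -2, -2 * (d : ℤ)]) 0 = 1 from rfl,
      show (![(1 : ℤ), 1, (d : ℤ), (d : ℤ), -2, -2 * (d : ℤ)]) 1 = 1 from rfl,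
      show (![(1 : ℤ), 1, (d : ℤ), (d : ℤ), -2, -2 * (d : ℤ)]) 2 = (d:ℤ) from rfl,
      show (![(1 : ℤ), 1, (d : ℤ), (d : ℤ), -2, -2 * (d : ℤ)]) 3 = (d:ℤ) from rfl,
      show (![(1 : ℤ), 1, (d : ℤ), (d : ℤ), -2, -2 * (d : ℤ)]) 4 = -2 from rfl,
      show (![(1 : ℤ), 1, (d : ℤ), (d : ℤ), -2, -2 * (d : ℤ)]) 5 = -2 * (d:ℤ) from rfl] at heq
    rw [← hbeq 0, ← hbeq 1, ← hbeq 2, ← hbeq 3, ← hbeq 4, ← hbeq 5] at heq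
    simp only [hΦ] at heq
    set s : Fin k → ℤ := fun j =>
      (b 0 j : ℤ) + (b 1 j : ℤ) + (d:ℤ) * (b 2 j : ℤ) + (d:ℤ) * (b 3 j : ℤ)
        - 2 * (b 4 j : ℤ) - 2 * (d:ℤ) * (b 5 j : ℤ) with hs
    have hsum : (∑ j, s j * (M:ℤ) ^ (j:ℕ)) = 0 := by
      have expand : (∑ j, s j * (M:ℤ) ^ (j:ℕ))
          = (∑ j, (b 0 j : ℤ) * (M:ℤ) ^ (j:ℕ)) + (∑ j, (b 1 j : ℤ) * (M:ℤ) ^ (j:ℕ))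
            + (d:ℤ) * (∑ j, (b 2 j : ℤ) * (M:ℤ) ^ (j:ℕ))
            + (d:ℤ) * (∑ j, (b 3 j : ℤ) * (M:ℤ) ^ (j:ℕ))
            - 2 * (∑ j, (b 4 j : ℤ) * (M:ℤ) ^ (j:ℕ))
            - 2 * (d:ℤ) * (∑ j, (b 5 j : ℤ) * (M:ℤ) ^ (j:ℕ)) := by
        rw [Finset.mul_sum, Finset.mul_sum, Finset.mul_sum, Finset.mul_sum,
          ← Finset.sum_add_distrib, ← Finset.sum_add_distrib, ← Finset.sum_add_distrib,
          ← Finset.sum_sub_distrib, ← Finset.sum_sub_distrib]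
        exact Finset.sum_congr rfl (fun j _ => by rw [hs]; ring)
      rw [expand]
      linarith [heq]
    have hbound : ∀ j, |s j| < (M:ℤ) := by
      intro j
      have hMc : (M:ℤ) = 4 * (d:ℤ) * (m:ℤ) + 1 := by
        rw [hM]; push_cast; ring
      have e0 : (b 0 j : ℤ) < m := by exact_mod_cast hblt 0 j
      have e1 : (b 1 j : ℤ) < m := by exact_mod_cast hblt 1 j
      have e2 : (b 2 j : ℤ) < m := by exact_mod_cast hblt 2 j
      have e3 : (b 3 j : ℤ) < m := by exact_mod_cast hblt 3 j
      have e4 : (b 4 j : ℤ) < m := by exact_mod_cast hblt 4 j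
      have e5 : (b 5 j : ℤ) < m := by exact_mod_cast hblt 5 j
      have n0 : (0:ℤ) ≤ (b 0 j : ℤ) := Int.ofNat_nonneg _
      have n1 : (0:ℤ) ≤ (b 1 j : ℤ) := Int.ofNat_nonneg _
      have n2 : (0:ℤ) ≤ (b 2 j : ℤ) := Int.ofNat_nonneg _
      have n3 : (0:ℤ) ≤ (b 3 j : ℤ) := Int.ofNat_nonneg _
      have n4 : (0:ℤ) ≤ (b 4 j : ℤ) := Int.ofNat_nonneg _
      have n5 : (0:ℤ) ≤ (b 5 j : ℤ) := Int.ofNat_nonneg _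
      have hdZ : (2:ℤ) ≤ (d:ℤ) := by exact_mod_cast hd2
      have hmZ : (1:ℤ) ≤ (m:ℤ) := by exact_mod_cast hm1
      have hsj : s j = (b 0 j : ℤ) + (b 1 j : ℤ) + (d:ℤ) * (b 2 j : ℤ) + (d:ℤ) * (b 3 j : ℤ)
          - 2 * (b 4 j : ℤ) - 2 * (d:ℤ) * (b 5 j : ℤ) := by simp only [hs]
      rw [abs_lt, hsj, hMc]
      constructor <;> nlinarith
    have hzero := st18_digit_zero (M:ℤ) s hbound hsum
    -- digitwise analysis
    have h2m : 2 * m ≤ d := by omega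
    have hdigit : ∀ j, b 0 j = b 1 j ∧ b 4 j = b 0 j ∧ b 2 j = b 3 j ∧ b 5 j = b 2 j := by
      intro j
      have hj : (b 0 j : ℤ) + (b 1 j : ℤ) + (d:ℤ) * (b 2 j : ℤ) + (d:ℤ) * (b 3 j : ℤ)
          - 2 * (b 4 j : ℤ) - 2 * (d:ℤ) * (b 5 j : ℤ) = 0 := by
        have := hzero j
        simp only [hs] at this
        exact this
      set u : ℤ := (b 0 j : ℤ) + (b 1 j : ℤ) - 2 * (b 4 j : ℤ) with hu
      set w : ℤ := (b 2 j : ℤ) + (b 3 j : ℤ) - 2 * (b 5 j : ℤ) with hw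
      have huw : u + (d:ℤ) * w = 0 := by rw [hu, hw]; linarith
      have e0 : (b 0 j : ℤ) < m := by exact_mod_cast hblt 0 j
      have e1 : (b 1 j : ℤ) < m := by exact_mod_cast hblt 1 j
      have e4 : (b 4 j : ℤ) < m := by exact_mod_cast hblt 4 j
      have n0 : (0:ℤ) ≤ (b 0 j : ℤ) := Int.ofNat_nonneg _
      have n1 : (0:ℤ) ≤ (b 1 j : ℤ) := Int.ofNat_nonneg _
      have n4 : (0:ℤ) ≤ (b 4 j : ℤ) := Int.ofNat_nonneg _
      have hmd2 : 2 * (m:ℤ) ≤ (d:ℤ) := by exact_mod_cast h2m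
      have habs_u : |u| < (d:ℤ) := by
        rw [abs_lt, hu]
        constructor <;> linarith
      have hw0 : w = 0 := by
        by_contra hne
        have h1 : (1:ℤ) ≤ |w| := Int.one_le_abs hne
        have : |u| = (d:ℤ) * |w| := by
          have : u = -((d:ℤ) * w) := by linarith
          rw [this, abs_neg, abs_mul, abs_of_nonneg (by positivity : (0:ℤ) ≤ (d:ℤ))]
        nlinarith
      have hu0 : u = 0 := by
        rw [hw0] at huw
        linarith
      have hq1 : b 0 j + b 1 j = b 4 j + b 4 j := by
        have : ((b 0 j + b 1 j : ℕ) : ℤ) = ((b 4 j + b 4 j : ℕ) : ℤ) := by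
          push_cast
          rw [hu] at hu0
          linarith
        exact_mod_cast this
      have hq2 : b 2 j + b 3 j = b 5 j + b 5 j := by
        have : ((b 2 j + b 3 j : ℕ) : ℤ) = ((b 5 j + b 5 j : ℕ) : ℤ) := by
          push_cast
          rw [hw] at hw0
          linarith
        exact_mod_cast this
      have hB3' := threeAPFree_iff_eq_right.1 hB3
      have h01 : b 0 j = b 1 j := hB3' (hbB 0 j) (hbB 4 j) (hbB 1 j) hq1
      have h23 : b 2 j = b 3 j := hB3' (hbB 2 j) (hbB 5 j) (hbB 3 j) hq2
      exact ⟨h01, by omega, h23, by omega⟩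
    have hb01 : b 0 = b 1 := funext (fun j => (hdigit j).1)
    have hb40 : b 4 = b 0 := funext (fun j => (hdigit j).2.1)
    have hb23 : b 2 = b 3 := funext (fun j => (hdigit j).2.2.1)
    have hb52 : b 5 = b 2 := funext (fun j => (hdigit j).2.2.2)
    have hv1 : v 1 = v 0 := by rw [← hbeq 0, ← hbeq 1, hb01]
    have hv4 : v 4 = v 0 := by rw [← hbeq 0, ← hbeq 4, hb40]
    have hv3 : v 3 = v 2 := by rw [← hbeq 2, ← hbeq 3, hb23]
    have hv5 : v 5 = v 2 := by rw [← hbeq 2, ← hbeq 5, hb52]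
    rw [Finset.sum_filter, Fin.sum_univ_six]
    simp only [show (![(1 : ℤ), 1, (d : ℤ), (d : ℤ), -2, -2 * (d : ℤ)]) 0 = 1 from rfl,
      show (![(1 : ℤ), 1, (d : ℤ), (d : ℤ), -2, -2 * (d : ℤ)]) 1 = 1 from rfl,
      show (![(1 : ℤ), 1, (d : ℤ), (d : ℤ), -2, -2 * (d : ℤ)]) 2 = (d:ℤ) from rfl,
      show (![(1 : ℤ), 1, (d : ℤ), (d : ℤ), -2, -2 * (d : ℤ)]) 3 = (d:ℤ) from rfl,
      show (![(1 : ℤ), 1, (d : ℤ), (d : ℤ), -2, -2 * (d : ℤ)]) 4 = -2 from rfl,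
      show (![(1 : ℤ), 1, (d : ℤ), (d : ℤ), -2, -2 * (d : ℤ)]) 5 = -2 * (d:ℤ) from rfl]
    rw [hv1, hv4, hv3, hv5]
    split_ifs <;> ring
end

section
/- Let a₁,…,a_k be positive integers, let L be a positive integer, and let A_L ⊆ {0,1,…,L−1} be a set such that (a₁+a₂+⋯+a_k)·max(A_L) < L and A_L contains no non-trivial solutions to the equation a₁x₁ + a₂x₂ + ⋯ + a_kx_k = a₁x₁' + a₂x₂' + ⋯ + a_kx_k'. Then for all integers i₁,…,i_k, j₁,…,j_k, every tuple (x₁,…,x_k,x₁',…,x_k') ∈ A_L^{2k} satisfying (i₁L + a₁)x₁ + ⋯ + (i_kL + a_k)x_k = (j₁L + a₁)x₁' + ⋯ + (j_kL + a_k)x_k' has x_i = x_i' for all i. -/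
/-- Let `a₁,…,a_k` be positive integers, `L` positive, and
`A_L ⊆ {0,…,L−1}` with `(a₁+⋯+a_k)·max(A_L) < L` and no non-trivial solutions to
`∑ aᵢxᵢ = ∑ aᵢxᵢ'`. Then for all integers `i₁,…,i_k, j₁,…,j_k`, every tuple from `A_L`
satisfying `∑ (iₜL + aₜ)xₜ = ∑ (jₜL + aₜ)xₜ'` has `x = x'`. -/
theorem statement19 (k : ℕ) (a : Fin k → ℕ) (ha : ∀ i, 0 < a i) (L : ℕ) (hL : 0 < L)
    (AL : Finset ℤ) (hsub : AL ⊆ Finset.Icc 0 ((L : ℤ) - 1))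
    (hmax : ∀ x ∈ AL, (∑ i, (a i : ℤ)) * x < (L : ℤ))
    (hsol : ∀ x x' : Fin k → ℤ, (∀ i, x i ∈ AL) → (∀ i, x' i ∈ AL) →
      ∑ i, (a i : ℤ) * x i = ∑ i, (a i : ℤ) * x' i → x = x') :
    ∀ I J : Fin k → ℤ, ∀ x x' : Fin k → ℤ, (∀ i, x i ∈ AL) → (∀ i, x' i ∈ AL) →
      ∑ i, (I i * (L : ℤ) + (a i : ℤ)) * x i = ∑ i, (J i * (L : ℤ) + (a i : ℤ)) * x' i →
      x = x' := by
  intro I J x x' hx hx' heq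
  rcases Nat.eq_zero_or_pos k with hk | hk
  · subst hk; funext i; exact i.elim0
  have hnn : ∀ z ∈ AL, (0:ℤ) ≤ z := fun z hz => (Finset.mem_Icc.1 (hsub hz)).1
  have hbound : ∀ y : Fin k → ℤ, (∀ i, y i ∈ AL) →
      0 ≤ ∑ i, (a i : ℤ) * y i ∧ ∑ i, (a i : ℤ) * y i < (L : ℤ) := by
    intro y hy
    constructor
    · exact Finset.sum_nonneg fun i _ => mul_nonneg (by positivity) (hnn _ (hy i))
    · obtain ⟨i0, _, hi0⟩ := Finset.exists_max_image Finset.univ y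
        ⟨⟨0, hk⟩, Finset.mem_univ _⟩
      calc ∑ i, (a i : ℤ) * y i ≤ ∑ i, (a i : ℤ) * y i0 :=
            Finset.sum_le_sum fun i _ =>
              mul_le_mul_of_nonneg_left (hi0 i (Finset.mem_univ _)) (by positivity)
        _ = (∑ i, (a i : ℤ)) * y i0 := by rw [Finset.sum_mul]
        _ < (L : ℤ) := hmax _ (hy i0)
  have key : ∑ i, (a i : ℤ) * x i - ∑ i, (a i : ℤ) * x' i
      = (L : ℤ) * (∑ i, J i * x' i - ∑ i, I i * x i) := by
    have h1 : ∑ i, (I i * (L : ℤ) + (a i : ℤ)) * x i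
        = (L : ℤ) * ∑ i, I i * x i + ∑ i, (a i : ℤ) * x i := by
      rw [Finset.mul_sum, ← Finset.sum_add_distrib]
      exact Finset.sum_congr rfl fun i _ => by ring
    have h2 : ∑ i, (J i * (L : ℤ) + (a i : ℤ)) * x' i
        = (L : ℤ) * ∑ i, J i * x' i + ∑ i, (a i : ℤ) * x' i := by
      rw [Finset.mul_sum, ← Finset.sum_add_distrib]
      exact Finset.sum_congr rfl fun i _ => by ring
    rw [h1, h2] at heq
    linarith
  obtain ⟨hx0, hxL⟩ := hbound x hx
  obtain ⟨hx'0, hx'L⟩ := hbound x' hx'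
  have hLpos : (0:ℤ) < (L:ℤ) := by exact_mod_cast hL
  set t := ∑ i, J i * x' i - ∑ i, I i * x i with ht
  have ht0 : t = 0 := by
    rcases lt_trichotomy t 0 with h | h | h
    · have : (L:ℤ) * t ≤ -L := by nlinarith
      linarith
    · exact h
    · have : (L:ℤ) ≤ (L:ℤ) * t := by nlinarith
      linarith
  have : ∑ i, (a i : ℤ) * x i = ∑ i, (a i : ℤ) * x' i := by
    rw [ht0, mul_zero] at key; linarith
  exact hsol x x' hx hx' this
end
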